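/- arXiv:2509.19961 — 3 statements merged into one kernel-verified Lean document; each statement's English description precedes it below -/
import Mathlib

section
/- There exists t₀ > 0 such that for all (m,n), (m′,n′) ∈ ℤ² with m ≥ 1, m′ ≥ 1, n ≥ 0, n′ ≥ 0, t_{(m,n)} ≥ t₀, t_{(m′,n′)} ≥ t₀, and such that each of the pairs (n, m) and (n′, m′) is a good lower approximation or a good upper approximation of the second kind of α: t_{(m,n)} ≥ t_{(m′,n′)} if and only if m ≥ m′. -/
/-- `t_{(m,n)} = (n − βm)/(α − β)`, the coordinate of `(m,n)` along the direction `(1,α)`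
in the basis `(1,α), (1,β)`. -/
noncomputable def tcoord (α β : ℝ) (m n : ℤ) : ℝ := ((n : ℝ) - β * m) / (α - β)

/-- `s_{(m,n)} = (αm − n)/(α − β)`, the coordinate of `(m,n)` along the direction `(1,β)`. -/
noncomputable def scoord (α β : ℝ) (m n : ℤ) : ℝ := (α * m - (n : ℝ)) / (α - β)

/-- The parallelogram `R_{(m,n)}` with opposite vertices `(0,0)` and `(m,n)` whose sides are
parallel to `(1,α)` and `(1,β)`:
`{a·(1,α) + b·(1,β) : a between 0 and t_{(m,n)}, b between 0 and s_{(m,n)}}`. -/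
def Rpar (α β : ℝ) (m n : ℤ) : Set (ℝ × ℝ) :=
  {p | ∃ a b : ℝ, a ∈ Set.uIcc 0 (tcoord α β m n) ∧ b ∈ Set.uIcc 0 (scoord α β m n) ∧
    p = (a + b, a * α + b * β)}

/-- The interior of the parallelogram `R_{(m,n)}` contains no point of `ℤ²`. -/
def NoLatticeInterior (α β : ℝ) (m n : ℤ) : Prop :=
  ∀ p ∈ interior (Rpar α β m n), ¬ ∃ k l : ℤ, p = ((k : ℝ), (l : ℝ))

/-- `(p,q)` (with `q ≥ 1` and `p − qα < 0`) is a *good lower approximation of the second kind*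
of `α`: `|p − qα| < |p′ − q′α|` for every `(p′,q′) ≠ (p,q)` with `1 ≤ q′ ≤ q` and
`p′ − q′α < 0`. -/
def GoodLower (α : ℝ) (p q : ℤ) : Prop :=
  1 ≤ q ∧ (p : ℝ) - q * α < 0 ∧
    ∀ p' q' : ℤ, (p', q') ≠ (p, q) → 1 ≤ q' → q' ≤ q → (p' : ℝ) - q' * α < 0 →
      |(p : ℝ) - q * α| < |(p' : ℝ) - q' * α|

/-- `(p,q)` (with `q ≥ 1` and `p − qα > 0`) is a *good upper approximation of the second kind*
of `α`. -/
def GoodUpper (α : ℝ) (p q : ℤ) : Prop :=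
  1 ≤ q ∧ 0 < (p : ℝ) - q * α ∧
    ∀ p' q' : ℤ, (p', q') ≠ (p, q) → 1 ≤ q' → q' ≤ q → 0 < (p' : ℝ) - q' * α →
      |(p : ℝ) - q * α| < |(p' : ℝ) - q' * α|

set_option maxHeartbeats 1600000

private def itseq (a b c d : ℤ) (v : ℤ × ℤ) : ℕ → ℤ × ℤ
  | 0 => v
  | k+1 => ((itseq a b c d v k).1 * a + (itseq a b c d v k).2 * b,
            (itseq a b c d v k).1 * c + (itseq a b c d v k).2 * d)

private lemma itseq_spec (a b c d : ℤ) (γ f : ℝ)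
    (h : ∀ m n : ℤ, ((m * c + n * d : ℤ) : ℝ) - ((m * a + n * b : ℤ) : ℝ) * γ
          = f * ((n : ℝ) - (m : ℝ) * γ)) (v : ℤ × ℤ) :
    ∀ k : ℕ, (((itseq a b c d v k).2 : ℝ) - ((itseq a b c d v k).1 : ℝ) * γ)
      = f ^ k * ((v.2 : ℝ) - (v.1 : ℝ) * γ)
  | 0 => by simp [itseq]
  | (k+1) => by
      have ih := itseq_spec a b c d γ f h v k
      have h2 := h (itseq a b c d v k).1 (itseq a b c d v k).2
      simp only [itseq]
      rw [pow_succ]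
      push_cast at h2 ⊢
      rw [h2, ih]; ring

/-- There exists `t₀ > 0` such that for all `(m,n), (m′,n′) ∈ ℤ²` with
`m, m′ ≥ 1`, `n, n′ ≥ 0`, `t_{(m,n)} ≥ t₀`, `t_{(m′,n′)} ≥ t₀`, and such that each of
`(n,m)` and `(n′,m′)` is a good lower or a good upper approximation of the second kind of
`α`: `t_{(m,n)} ≥ t_{(m′,n′)}` if and only if `m ≥ m′`. -/
theorem stmt11 (A : Matrix (Fin 2) (Fin 2) ℤ) (hdet : A.det = 1)
    (lam mu α β : ℝ)
    (hlam0 : 0 < lam) (hlam1 : lam < 1) (hmu : 1 < mu)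
    (hAα0 : (A 0 0 : ℝ) + A 0 1 * α = lam)
    (hAα1 : (A 1 0 : ℝ) + A 1 1 * α = lam * α)
    (hAβ0 : (A 0 0 : ℝ) + A 0 1 * β = mu)
    (hAβ1 : (A 1 0 : ℝ) + A 1 1 * β = mu * β)
    (hβα : β < α) (hα : 0 < α) :
    ∃ t₀ > (0 : ℝ), ∀ m n m' n' : ℤ, 1 ≤ m → 1 ≤ m' → 0 ≤ n → 0 ≤ n' →
      t₀ ≤ tcoord α β m n → t₀ ≤ tcoord α β m' n' →
      (GoodLower α n m ∨ GoodUpper α n m) →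
      (GoodLower α n' m' ∨ GoodUpper α n' m') →
      (tcoord α β m' n' ≤ tcoord α β m n ↔ m' ≤ m) := by
  have hαβ : (0:ℝ) < α - β := by linarith
  have hdet2 : A 0 0 * A 1 1 - A 0 1 * A 1 0 = 1 := by
    rw [Matrix.det_fin_two] at hdet; linarith
  have hdetR : ((A 0 0 : ℤ):ℝ) * ((A 1 1 : ℤ):ℝ) - ((A 0 1 : ℤ):ℝ) * ((A 1 0 : ℤ):ℝ) = 1 := by
    exact_mod_cast hdet2
  have hA01 : (A 0 1 : ℝ) ≠ 0 := by
    intro h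
    have h1 : lam = (A 0 0 : ℝ) := by rw [← hAα0, h]; ring
    have h2 : (0:ℤ) < A 0 0 := by exact_mod_cast h1 ▸ hlam0
    have h3 : (1:ℝ) ≤ (A 0 0 : ℤ) := by exact_mod_cast h2
    linarith [h1 ▸ hlam1]
  have hquad : lam^2 - ((A 0 0 : ℝ) + (A 1 1 : ℝ)) * lam + 1 = 0 := by
    have h1 : (A 0 1:ℝ) * α = lam - A 0 0 := by linarith
    have h2 : (A 0 1:ℝ) * ((A 1 0:ℝ) + (A 1 1:ℝ) * α) = (A 0 1:ℝ) * (lam * α) := by rw [hAα1]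
    linear_combination ((A 1 1 : ℝ) - lam) * h1 - h2 - hdetR
  have hratlam : ∀ q : ℚ, (q:ℝ) ≠ lam := by
    intro q hq
    have hq2 : q^2 - ((A 0 0 + A 1 1 : ℤ) : ℚ) * q + 1 = 0 := by
      rw [← hq] at hquad
      exact_mod_cast hquad
    have h3 : (q.num:ℚ) = q * q.den := (Rat.mul_den_eq_num q).symm
    have hnum : q.num^2 - (A 0 0 + A 1 1) * q.num * q.den + (q.den:ℤ)^2 = 0 := by
      have : (q.num:ℚ)^2 - ((A 0 0 + A 1 1 : ℤ):ℚ) * q.num * q.den + (q.den:ℚ)^2 = 0 := by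
        rw [h3]; linear_combination (q.den:ℚ)^2 * hq2
      exact_mod_cast this
    have hdvd : ((q.den:ℤ)) ∣ q.num^2 := ⟨(A 0 0 + A 1 1) * q.num - q.den, by linarith⟩
    have hdvd' : q.den ∣ q.num.natAbs^2 := by
      have h4 := Int.natAbs_dvd_natAbs.mpr hdvd
      simpa [Int.natAbs_pow] using h4
    have hden1 : q.den = 1 := (q.reduced.symm.pow_right 2).eq_one_of_dvd hdvd'
    have h5 : ((q.num:ℚ):ℝ) = lam := by rw [(Rat.den_eq_one_iff q).mp hden1]; exact hq
    have h6 : ((q.num:ℤ):ℝ) = lam := by exact_mod_cast h5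
    have h7 : (0:ℤ) < q.num := by exact_mod_cast h6 ▸ hlam0
    have h8 : (1:ℝ) ≤ ((q.num:ℤ):ℝ) := by exact_mod_cast h7
    linarith [h6 ▸ hlam1]
  have hirr : ∀ m n : ℤ, m ≠ 0 → (n:ℝ) ≠ (m:ℝ) * α := by
    intro m n hm h
    have hmR : (m:ℝ) ≠ 0 := Int.cast_ne_zero.2 hm
    apply hratlam ((A 0 0 : ℚ) + A 0 1 * ((n:ℚ) / (m:ℚ)))
    have hα' : α = (n:ℝ)/(m:ℝ) := by field_simp; linarith
    rw [← hAα0, hα']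
    push_cast
    ring
  have hfloor : ∀ m : ℤ, m ≠ 0 → (⌊(m:ℝ)*α⌋ : ℝ) < (m:ℝ)*α :=
    fun m hm => lt_of_le_of_ne (Int.floor_le _) (hirr m ⌊(m:ℝ)*α⌋ hm)
  have hf1 : (⌊α⌋:ℝ) < α := by
    have := hfloor 1 one_ne_zero; push_cast at this; simpa using this
  have hf2 : α < (⌊α⌋:ℝ) + 1 := Int.lt_floor_add_one α
  -- |n - mα| < 1 for good approximations
  have habs : ∀ m n : ℤ, (GoodLower α n m ∨ GoodUpper α n m) → |(n:ℝ) - m*α| < 1 := by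
    intro m n hg
    rcases hg with ⟨hq, hneg, hmin⟩ | ⟨hq, hpos, hmin⟩
    · by_cases he : ((⌊α⌋ : ℤ), (1:ℤ)) = (n, m)
      · injection he with h1 h2; subst h1; subst h2
        rw [abs_of_neg hneg]; push_cast; linarith
      · have h5 := hmin ⌊α⌋ 1 he le_rfl hq (by push_cast; linarith)
        have h6 : |(⌊α⌋:ℝ) - (1:ℤ)*α| < 1 := by
          rw [abs_of_neg (by push_cast; linarith)]; push_cast; linarith
        linarith
    · by_cases he : ((⌊α⌋+1 : ℤ), (1:ℤ)) = (n, m)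
      · injection he with h1 h2; subst h1; subst h2
        rw [abs_of_pos hpos]; push_cast; linarith
      · have h5 := hmin (⌊α⌋+1) 1 he le_rfl hq (by push_cast; linarith)
        have h6 : |((⌊α⌋+1:ℤ):ℝ) - (1:ℤ)*α| < 1 := by
          rw [abs_of_pos (by push_cast; linarith)]; push_cast; linarith
        linarith
  -- linear relations for the matrix iteration
  have hrel_α : ∀ m n : ℤ, ((m * -(A 1 0) + n * A 0 0 : ℤ) : ℝ)
      - ((m * A 1 1 + n * -(A 0 1) : ℤ) : ℝ) * α = lam * ((n:ℝ) - (m:ℝ) * α) := by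
    intro m n; push_cast; linear_combination (n:ℝ) * hAα0 - (m:ℝ) * hAα1
  have hrel_β : ∀ m n : ℤ, ((m * -(A 1 0) + n * A 0 0 : ℤ) : ℝ)
      - ((m * A 1 1 + n * -(A 0 1) : ℤ) : ℝ) * β = mu * ((n:ℝ) - (m:ℝ) * β) := by
    intro m n; push_cast; linear_combination (n:ℝ) * hAβ0 - (m:ℝ) * hAβ1
  have hiter : ∀ mv nv : ℤ, ∀ k : ℕ, ∃ q p : ℤ,
      ((p:ℝ) - (q:ℝ)*α = lam^k * ((nv:ℝ) - (mv:ℝ)*α)) ∧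
      ((p:ℝ) - (q:ℝ)*β = mu^k * ((nv:ℝ) - (mv:ℝ)*β)) :=
    fun mv nv k => ⟨(itseq (A 1 1) (-(A 0 1)) (-(A 1 0)) (A 0 0) (mv, nv) k).1,
      (itseq (A 1 1) (-(A 0 1)) (-(A 1 0)) (A 0 0) (mv, nv) k).2,
      itseq_spec _ _ _ _ α lam hrel_α (mv, nv) k, itseq_spec _ _ _ _ β mu hrel_β (mv, nv) k⟩
  -- seed
  obtain ⟨m₀, hm₀r⟩ := exists_int_gt (1/(α-β))
  have hm₀1 : (1:ℝ) < (m₀:ℝ) * (α - β) := by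
    have h0 : (0:ℝ) < 1/(α-β) := by positivity
    calc (1:ℝ) = (1/(α-β)) * (α-β) := by field_simp
      _ < (m₀:ℝ) * (α-β) := mul_lt_mul_of_pos_right hm₀r hαβ
  have hm₀0 : (0:ℝ) < (m₀:ℝ) := lt_trans (by positivity) hm₀r
  have hm₀z : m₀ ≠ 0 := by
    intro h; rw [h] at hm₀0; norm_num at hm₀0
  set n₀ : ℤ := ⌊(m₀:ℝ)*α⌋ with hn₀def
  have hc0 : (0:ℝ) < (m₀:ℝ)*α - (n₀:ℝ) := by
    have := hfloor m₀ hm₀z; linarith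
  have hc1 : (m₀:ℝ)*α - (n₀:ℝ) < 1 := by
    have := Int.lt_floor_add_one ((m₀:ℝ)*α); linarith
  have hd0 : (0:ℝ) < (n₀:ℝ) - (m₀:ℝ)*β := by nlinarith
  have hd1 : (1:ℝ) < ((n₀:ℝ)+1) - (m₀:ℝ)*β := by nlinarith
  -- small approximations on each side
  have hlow : ∀ ε : ℝ, 0 < ε → ∃ p q : ℤ, 1 ≤ q ∧ (p:ℝ) - (q:ℝ)*α < 0 ∧ (q:ℝ)*α - (p:ℝ) < ε := by
    intro ε hε
    obtain ⟨k, hk⟩ := exists_pow_lt_of_lt_one (div_pos hε hc0) hlam1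
    obtain ⟨q, p, hsα, hsβ⟩ := hiter m₀ n₀ k
    have hlamk : (0:ℝ) < lam^k := pow_pos hlam0 k
    have hmuk : (0:ℝ) < mu^k := pow_pos (by linarith) k
    have hεc : lam^k * ((m₀:ℝ)*α - (n₀:ℝ)) < ε := by
      have h7 := mul_lt_mul_of_pos_right hk hc0
      rwa [div_mul_cancel₀ _ (ne_of_gt hc0)] at h7
    have hsα' : (p:ℝ) - (q:ℝ)*α = -(lam^k * ((m₀:ℝ)*α - (n₀:ℝ))) := by rw [hsα]; ring
    have hcomb : (q:ℝ)*(α-β) = mu^k * ((n₀:ℝ) - (m₀:ℝ)*β) + lam^k * ((m₀:ℝ)*α - (n₀:ℝ)) := by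
      linear_combination hsβ - hsα
    refine ⟨p, q, ?_, ?_, ?_⟩
    · have hq : (0:ℝ) < (q:ℝ) := by
        nlinarith [mul_pos hmuk hd0, mul_pos hlamk hc0]
      have : (0:ℤ) < q := by exact_mod_cast hq
      omega
    · rw [hsα']
      have := mul_pos hlamk hc0
      linarith
    · have := mul_pos hlamk hc0
      linarith [hsα', hεc]
  have hupp : ∀ ε : ℝ, 0 < ε → ∃ p q : ℤ, 1 ≤ q ∧ 0 < (p:ℝ) - (q:ℝ)*α ∧ (p:ℝ) - (q:ℝ)*α < ε := by
    intro ε hε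
    have hcpos : (0:ℝ) < ((n₀:ℝ)+1) - (m₀:ℝ)*α := by linarith
    obtain ⟨k, hk⟩ := exists_pow_lt_of_lt_one (div_pos hε hcpos) hlam1
    obtain ⟨q, p, hsα, hsβ⟩ := hiter m₀ (n₀+1) k
    push_cast at hsα hsβ
    have hlamk : (0:ℝ) < lam^k := pow_pos hlam0 k
    have hlamk1 : lam^k ≤ 1 := pow_le_one₀ (le_of_lt hlam0) (le_of_lt hlam1)
    have hmuk : (1:ℝ) ≤ mu^k := one_le_pow₀ (by linarith)
    have hεc : lam^k * (((n₀:ℝ)+1) - (m₀:ℝ)*α) < ε := by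
      have h7 := mul_lt_mul_of_pos_right hk hcpos
      rwa [div_mul_cancel₀ _ (ne_of_gt hcpos)] at h7
    have hcomb : (q:ℝ)*(α-β) = mu^k * (((n₀:ℝ)+1) - (m₀:ℝ)*β) - lam^k * (((n₀:ℝ)+1) - (m₀:ℝ)*α) := by
      linear_combination hsβ - hsα
    have hplam : (0:ℝ) < lam^k * (((n₀:ℝ)+1) - (m₀:ℝ)*α) := mul_pos hlamk hcpos
    refine ⟨p, q, ?_, ?_, ?_⟩
    · have hq : (0:ℝ) < (q:ℝ) := by
        have h8a : lam^k * (((n₀:ℝ)+1) - (m₀:ℝ)*α) ≤ ((n₀:ℝ)+1) - (m₀:ℝ)*α :=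
          mul_le_of_le_one_left (le_of_lt hcpos) hlamk1
        have h8 : lam^k * (((n₀:ℝ)+1) - (m₀:ℝ)*α) < 1 := by linarith
        have h9 : (1:ℝ) < mu^k * (((n₀:ℝ)+1) - (m₀:ℝ)*β) :=
          lt_of_lt_of_le hd1 (le_mul_of_one_le_left (by linarith) hmuk)
        nlinarith [hcomb, hαβ]
      have : (0:ℤ) < q := by exact_mod_cast hq
      omega
    · rw [hsα]; exact hplam
    · rw [hsα]; exact hεc
  -- choose the comparison pairs
  obtain ⟨p₁, q₁, hq₁, hp₁neg, hp₁small⟩ := hlow ((α-β)/2) (by linarith)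
  obtain ⟨p₂, q₂, hq₂, hp₂pos, hp₂small⟩ := hupp ((α-β)/2) (by linarith)
  set Q : ℤ := max q₁ q₂ with hQdef
  have hQ1 : (1:ℤ) ≤ Q := le_trans hq₁ (le_max_left _ _)
  have hQR : (1:ℝ) ≤ (Q:ℝ) := by exact_mod_cast hQ1
  refine ⟨(Q:ℝ) + 2 + 1/(α-β), ?_, ?_⟩
  · have h0 : (0:ℝ) < 1/(α-β) := by positivity
    linarith
  have htc : ∀ a b : ℤ, tcoord α β a b = (a:ℝ) + ((b:ℝ) - (a:ℝ)*α)/(α-β) := by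
    intro a b; unfold tcoord; field_simp; ring
  have hkey : ∀ m n : ℤ, (Q:ℝ) + 2 + 1/(α-β) ≤ tcoord α β m n →
      (GoodLower α n m ∨ GoodUpper α n m) →
      (Q:ℝ) + 2 < (m:ℝ) ∧ |(n:ℝ) - (m:ℝ)*α| < (α-β)/2 := by
    intro m n ht hg
    have h1 : |(n:ℝ) - (m:ℝ)*α| < 1 := habs m n hg
    have hm : (Q:ℝ) + 2 < (m:ℝ) := by
      have h2 : ((n:ℝ) - (m:ℝ)*α)/(α-β) < 1/(α-β) :=
        (div_lt_div_iff_of_pos_right hαβ).mpr (lt_of_abs_lt h1)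
      rw [htc] at ht
      linarith
    refine ⟨hm, ?_⟩
    have hqm1 : q₁ < m := by
      have hh : (q₁:ℝ) ≤ (Q:ℝ) := by exact_mod_cast le_max_left q₁ q₂
      have : (q₁:ℝ) < (m:ℝ) := by linarith
      exact_mod_cast this
    have hqm2 : q₂ < m := by
      have hh : (q₂:ℝ) ≤ (Q:ℝ) := by exact_mod_cast le_max_right q₁ q₂
      have : (q₂:ℝ) < (m:ℝ) := by linarith
      exact_mod_cast this
    rcases hg with ⟨hq, hneg, hmin⟩ | ⟨hq, hpos, hmin⟩
    · have hne : (p₁, q₁) ≠ (n, m) := by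
        intro h; injection h with _ h2; omega
      have h5 := hmin p₁ q₁ hne hq₁ (le_of_lt hqm1) hp₁neg
      have h6 : |(p₁:ℝ) - (q₁:ℝ)*α| = (q₁:ℝ)*α - (p₁:ℝ) := by
        rw [abs_of_neg hp₁neg]; ring
      linarith
    · have hne : (p₂, q₂) ≠ (n, m) := by
        intro h; injection h with _ h2; omega
      have h5 := hmin p₂ q₂ hne hq₂ (le_of_lt hqm2) hp₂pos
      have h6 : |(p₂:ℝ) - (q₂:ℝ)*α| = (p₂:ℝ) - (q₂:ℝ)*α := abs_of_pos hp₂pos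
      linarith
  have hhalf : ∀ x : ℝ, |x| < (α-β)/2 → -(1/2 : ℝ) < x/(α-β) ∧ x/(α-β) < 1/2 := by
    intro x hx
    rw [abs_lt] at hx
    constructor
    · rw [neg_lt, ← neg_div, div_lt_iff₀ hαβ]; linarith
    · rw [div_lt_iff₀ hαβ]; linarith
  intro m n m' n' hm1 hm'1 hn hn' ht ht' hg hg'
  have h1 := habs m n hg
  have h1' := habs m' n' hg'
  obtain ⟨hmQ, hns⟩ := hkey m n ht hg
  obtain ⟨hmQ', hns'⟩ := hkey m' n' ht' hg'
  have hlt : ∀ a b a' b' : ℤ, |(b:ℝ) - (a:ℝ)*α| < (α-β)/2 → |(b':ℝ) - (a':ℝ)*α| < (α-β)/2 →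
      a' < a → tcoord α β a' b' < tcoord α β a b := by
    intro a b a' b' h h' haa
    rw [htc, htc]
    obtain ⟨k1, k2⟩ := hhalf _ h
    obtain ⟨k3, k4⟩ := hhalf _ h'
    have ha : (a':ℝ) + 1 ≤ (a:ℝ) := by exact_mod_cast haa
    linarith
  have heqn : m = m' → n = n' := by
    intro he; subst he
    have hm2 : (2:ℤ) ≤ m := by
      have : (2:ℝ) ≤ (m:ℝ) := by linarith
      exact_mod_cast this
    have e1 := abs_lt.mp h1
    have e1' := abs_lt.mp h1'
    rcases hg with ⟨_, hneg, hmin⟩ | ⟨_, hpos, hmin⟩ <;>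
      rcases hg' with ⟨_, hneg', hmin'⟩ | ⟨_, hpos', hmin'⟩
    · -- both lower
      have k1 : (-1:ℤ) < n - n' := by
        exact_mod_cast (show (-1:ℝ) < ((n - n' : ℤ):ℝ) by push_cast; linarith)
      have k2 : (n - n' : ℤ) < 1 := by
        exact_mod_cast (show ((n - n' : ℤ):ℝ) < 1 by push_cast; linarith)
      omega
    · -- lower / upper : contradiction
      exfalso
      have hne1 : ((⌊α⌋:ℤ), (1:ℤ)) ≠ (n, m) := by
        intro h; injection h with _ h2; omega
      have hne2 : ((⌊α⌋+1:ℤ), (1:ℤ)) ≠ (n', m) := by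
        intro h; injection h with _ h2; omega
      have e2 := hmin ⌊α⌋ 1 hne1 le_rfl (by omega) (by push_cast; linarith)
      have e3 := hmin' (⌊α⌋+1) 1 hne2 le_rfl (by omega) (by push_cast; linarith)
      rw [abs_of_neg hneg, abs_of_neg (by push_cast; linarith : (⌊α⌋:ℝ) - (1:ℤ)*α < 0)] at e2
      rw [abs_of_pos hpos', abs_of_pos (by push_cast; linarith : (0:ℝ) < ((⌊α⌋+1:ℤ):ℝ) - (1:ℤ)*α)] at e3
      push_cast at e2 e3
      have hnn : n' - n = 1 := by
        have hr1 : (0:ℝ) < (n':ℝ) - n := by linarith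
        have hr2 : ((n':ℝ)) - n < 2 := by linarith
        have : (0:ℤ) < n' - n := by exact_mod_cast (by push_cast; linarith : (0:ℝ) < ((n' - n : ℤ):ℝ))
        have : (n' - n : ℤ) < 2 := by exact_mod_cast (by push_cast; linarith : ((n' - n : ℤ):ℝ) < 2)
        omega
      have : ((n':ℝ)) - n = 1 := by exact_mod_cast (by exact_mod_cast congrArg (Int.cast : ℤ → ℝ) hnn : ((n' - n : ℤ):ℝ) = 1)
      linarith
    · -- upper / lower : contradiction (symmetric)
      exfalso
      have hne1 : ((⌊α⌋:ℤ), (1:ℤ)) ≠ (n', m) := by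
        intro h; injection h with _ h2; omega
      have hne2 : ((⌊α⌋+1:ℤ), (1:ℤ)) ≠ (n, m) := by
        intro h; injection h with _ h2; omega
      have e2 := hmin' ⌊α⌋ 1 hne1 le_rfl (by omega) (by push_cast; linarith)
      have e3 := hmin (⌊α⌋+1) 1 hne2 le_rfl (by omega) (by push_cast; linarith)
      rw [abs_of_neg hneg', abs_of_neg (by push_cast; linarith : (⌊α⌋:ℝ) - (1:ℤ)*α < 0)] at e2
      rw [abs_of_pos hpos, abs_of_pos (by push_cast; linarith : (0:ℝ) < ((⌊α⌋+1:ℤ):ℝ) - (1:ℤ)*α)] at e3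
      push_cast at e2 e3
      have hnn : n - n' = 1 := by
        have : (0:ℤ) < n - n' := by exact_mod_cast (by push_cast; linarith : (0:ℝ) < ((n - n' : ℤ):ℝ))
        have : (n - n' : ℤ) < 2 := by exact_mod_cast (by push_cast; linarith : ((n - n' : ℤ):ℝ) < 2)
        omega
      have : ((n:ℝ)) - n' = 1 := by exact_mod_cast (by exact_mod_cast congrArg (Int.cast : ℤ → ℝ) hnn : ((n - n' : ℤ):ℝ) = 1)
      linarith
    · -- both upper
      have k1 : (-1:ℤ) < n - n' := by
        exact_mod_cast (show (-1:ℝ) < ((n - n' : ℤ):ℝ) by push_cast; linarith)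
      have k2 : (n - n' : ℤ) < 1 := by
        exact_mod_cast (show ((n - n' : ℤ):ℝ) < 1 by push_cast; linarith)
      omega
  constructor
  · intro h
    by_contra hc
    push_neg at hc
    have := hlt m' n' m n hns' hns hc
    linarith
  · intro h
    rcases lt_or_eq_of_le h with h2 | h2
    · exact le_of_lt (hlt m n m' n' hns hns' h2)
    · rw [h2, heqn h2.symm]
end

section
/- Every maximal run of T is finite, the map t ↦ λ·t is a strictly increasing bijection of T onto itself mapping T⁻ onto T⁻ and T⁺ onto T⁺, and there exists a nonzero integer d such that λ·R_j = R_{j+d} for every j ∈ ℤ; in particular b_{j+d} = b_j for all j ∈ ℤ, i.e. the bi-infinite run-length sequence (b_j)_{j∈ℤ} is periodic. -/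
/-- `T⁻`: the set of values `t_{(m,n)} > 0` with `n − αm < 0` such that the interior of
`R_{(m,n)}` contains no point of `ℤ²`. -/
def Tminus (α β : ℝ) : Set ℝ :=
  {t | ∃ m n : ℤ, t = tcoord α β m n ∧ 0 < t ∧ (n : ℝ) - α * m < 0 ∧
    NoLatticeInterior α β m n}

/-- `T⁺`: the set of values `t_{(m,n)} > 0` with `n − αm > 0` such that the interior of
`R_{(m,n)}` contains no point of `ℤ²`. -/
def Tplus (α β : ℝ) : Set ℝ :=
  {t | ∃ m n : ℤ, t = tcoord α β m n ∧ 0 < t ∧ 0 < (n : ℝ) - α * m ∧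
    NoLatticeInterior α β m n}

/-- `T = T⁺ ∪ T⁻`. -/
def Tset (α β : ℝ) : Set ℝ := Tplus α β ∪ Tminus α β

/-- Given an increasing enumeration `e : ℤ ≃o T` of `T`, a *run* is a nonempty set of
consecutive indices all of whose elements lie in `T⁻`, or all of whose elements lie
in `T⁺`. -/
def IsRun (α β : ℝ) (e : ℤ ≃o ↥(Tset α β)) (S : Set ℤ) : Prop :=
  S.Nonempty ∧ S.OrdConnected ∧
    ((∀ j ∈ S, ((e j : ℝ)) ∈ Tminus α β) ∨ (∀ j ∈ S, ((e j : ℝ)) ∈ Tplus α β))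

/-- A *maximal run* is a run that is maximal under inclusion. -/
def IsMaxRun (α β : ℝ) (e : ℤ ≃o ↥(Tset α β)) (S : Set ℤ) : Prop :=
  IsRun α β e S ∧ ∀ S' : Set ℤ, IsRun α β e S' → S ⊆ S' → S' = S

/-- `ρ : ℤ → Set ℤ` lists the maximal runs in increasing order. -/
def IsRunEnum (α β : ℝ) (e : ℤ ≃o ↥(Tset α β)) (ρ : ℤ → Set ℤ) : Prop :=
  (∀ j : ℤ, IsMaxRun α β e (ρ j)) ∧
  (∀ S : Set ℤ, IsMaxRun α β e S → ∃ j : ℤ, ρ j = S) ∧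
  (∀ i j : ℤ, i < j → ∀ x ∈ ρ i, ∀ y ∈ ρ j, x < y)


/-! ### Auxiliary infrastructure -/

section Aux

lemma mul_uIcc_zero_iff {c t a : ℝ} (hc : 0 < c) :
    c * a ∈ Set.uIcc 0 (c * t) ↔ a ∈ Set.uIcc 0 t := by
  rw [Set.mem_uIcc, Set.mem_uIcc]
  constructor
  · rintro (⟨h1, h2⟩ | ⟨h1, h2⟩)
    · exact Or.inl ⟨by nlinarith, by nlinarith⟩
    · exact Or.inr ⟨by nlinarith, by nlinarith⟩
  · rintro (⟨h1, h2⟩ | ⟨h1, h2⟩)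
    · exact Or.inl ⟨by nlinarith, by nlinarith⟩
    · exact Or.inr ⟨by nlinarith, by nlinarith⟩

noncomputable def coordHomeo (α β : ℝ) (h : β < α) : (ℝ × ℝ) ≃ₜ (ℝ × ℝ) :=
  { toFun := fun p => (p.1 + p.2, p.1 * α + p.2 * β)
    invFun := fun p => ((p.2 - β * p.1) / (α - β), (α * p.1 - p.2) / (α - β))
    left_inv := fun p => by
      have hne : α - β ≠ 0 := by linarith
      ext <;> simp only [] <;> field_simp <;> ring
    right_inv := fun p => by
      have hne : α - β ≠ 0 := by linarith
      ext <;> simp only [] <;> field_simp <;> ring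
    continuous_toFun := by continuity
    continuous_invFun := by continuity }

lemma Rpar_eq_image (α β : ℝ) (h : β < α) (m n : ℤ) :
    Rpar α β m n = coordHomeo α β h ''
      (Set.uIcc 0 (tcoord α β m n) ×ˢ Set.uIcc 0 (scoord α β m n)) := by
  ext p
  constructor
  · rintro ⟨a, b, ha, hb, rfl⟩
    exact ⟨(a, b), ⟨ha, hb⟩, rfl⟩
  · rintro ⟨⟨a, b⟩, ⟨ha, hb⟩, rfl⟩
    exact ⟨a, b, ha, hb, rfl⟩

lemma interior_Rpar (α β : ℝ) (h : β < α) (m n : ℤ) :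
    interior (Rpar α β m n) = coordHomeo α β h ''
      (Set.Ioo (0 ⊓ tcoord α β m n) (0 ⊔ tcoord α β m n) ×ˢ
       Set.Ioo (0 ⊓ scoord α β m n) (0 ⊔ scoord α β m n)) := by
  rw [Rpar_eq_image α β h m n, ← Homeomorph.image_interior, interior_prod_eq,
    Set.uIcc, Set.uIcc, interior_Icc, interior_Icc]

lemma coords_unique (α β : ℝ) (h : β < α) {a b x y : ℝ}
    (h1 : x = a + b) (h2 : y = a * α + b * β) :
    a = (y - β * x) / (α - β) ∧ b = (α * x - y) / (α - β) := by
  have hne : α - β ≠ 0 := by linarith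
  constructor <;> · field_simp; subst h1 h2; ring

lemma mem_interior_Rpar (α β : ℝ) (h : β < α) (m n : ℤ) (p : ℝ × ℝ) :
    p ∈ interior (Rpar α β m n) ↔
      ∃ a b : ℝ, a ∈ Set.Ioo (0 ⊓ tcoord α β m n) (0 ⊔ tcoord α β m n) ∧
        b ∈ Set.Ioo (0 ⊓ scoord α β m n) (0 ⊔ scoord α β m n) ∧
        p = (a + b, a * α + b * β) := by
  rw [interior_Rpar α β h m n]
  constructor
  · rintro ⟨⟨a, b⟩, ⟨ha, hb⟩, rfl⟩
    exact ⟨a, b, ha, hb, rfl⟩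
  · rintro ⟨a, b, ha, hb, rfl⟩
    exact ⟨(a, b), ⟨ha, hb⟩, rfl⟩

noncomputable def matHomeo (a00 a01 a10 a11 : ℤ) (hdet : a00 * a11 - a01 * a10 = 1) :
    (ℝ × ℝ) ≃ₜ (ℝ × ℝ) :=
  { toFun := fun p => ((a00 : ℝ) * p.1 + a01 * p.2, (a10 : ℝ) * p.1 + a11 * p.2)
    invFun := fun p => ((a11 : ℝ) * p.1 - a01 * p.2, -(a10 : ℝ) * p.1 + a00 * p.2)
    left_inv := fun p => by
      have h : (a00 : ℝ) * a11 - a01 * a10 = 1 := by exact_mod_cast hdet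
      ext
      · show (a11 : ℝ) * ((a00 : ℝ) * p.1 + a01 * p.2) - a01 * ((a10 : ℝ) * p.1 + a11 * p.2) = p.1
        linear_combination p.1 * h
      · show -(a10 : ℝ) * ((a00 : ℝ) * p.1 + a01 * p.2) + a00 * ((a10 : ℝ) * p.1 + a11 * p.2) = p.2
        linear_combination p.2 * h
    right_inv := fun p => by
      have h : (a00 : ℝ) * a11 - a01 * a10 = 1 := by exact_mod_cast hdet
      ext
      · show (a00 : ℝ) * ((a11 : ℝ) * p.1 - a01 * p.2) + a01 * (-(a10 : ℝ) * p.1 + a00 * p.2) = p.1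
        linear_combination p.1 * h
      · show (a10 : ℝ) * ((a11 : ℝ) * p.1 - a01 * p.2) + a11 * (-(a10 : ℝ) * p.1 + a00 * p.2) = p.2
        linear_combination p.2 * h
    continuous_toFun := by continuity
    continuous_invFun := by continuity }

section MatAction

variable {α β lam mu : ℝ} {a00 a01 a10 a11 : ℤ}
variable (hdet : a00 * a11 - a01 * a10 = 1)
variable (hβα : β < α)
variable (hAα0 : (a00 : ℝ) + a01 * α = lam) (hAα1 : (a10 : ℝ) + a11 * α = lam * α)
variable (hAβ0 : (a00 : ℝ) + a01 * β = mu) (hAβ1 : (a10 : ℝ) + a11 * β = mu * β)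

include hβα hAα0 hAα1 hAβ0 hAβ1 in
lemma tcoord_map (m n : ℤ) :
    tcoord α β (a00 * m + a01 * n) (a10 * m + a11 * n) = lam * tcoord α β m n := by
  have hne : α - β ≠ 0 := by linarith
  have hA00 : (a00 : ℝ) * (α - β) = mu * α - lam * β := by linear_combination α * hAβ0 - β * hAα0
  have hA01 : (a01 : ℝ) * (α - β) = lam - mu := by linear_combination hAα0 - hAβ0
  have hA10 : (a10 : ℝ) * (α - β) = α * β * (mu - lam) := by linear_combination α * hAβ1 - β * hAα1
  have hA11 : (a11 : ℝ) * (α - β) = lam * α - mu * β := by linear_combination hAα1 - hAβ1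
  have key : (((a10 * m + a11 * n : ℤ) : ℝ) - β * ((a00 * m + a01 * n : ℤ) : ℝ)) * (α - β)
      = (lam * (((n : ℝ) - β * m))) * (α - β) := by
    push_cast
    linear_combination (m : ℝ) * hA10 - β * m * hA00 + (n : ℝ) * hA11 - β * n * hA01
  have := mul_right_cancel₀ hne key
  rw [tcoord, tcoord, this, mul_div_assoc]

include hβα hAα0 hAα1 hAβ0 hAβ1 in
lemma scoord_map (m n : ℤ) :
    scoord α β (a00 * m + a01 * n) (a10 * m + a11 * n) = mu * scoord α β m n := by
  have hne : α - β ≠ 0 := by linarith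
  have hA00 : (a00 : ℝ) * (α - β) = mu * α - lam * β := by linear_combination α * hAβ0 - β * hAα0
  have hA01 : (a01 : ℝ) * (α - β) = lam - mu := by linear_combination hAα0 - hAβ0
  have hA10 : (a10 : ℝ) * (α - β) = α * β * (mu - lam) := by linear_combination α * hAβ1 - β * hAα1
  have hA11 : (a11 : ℝ) * (α - β) = lam * α - mu * β := by linear_combination hAα1 - hAβ1
  have key : (α * ((a00 * m + a01 * n : ℤ) : ℝ) - ((a10 * m + a11 * n : ℤ) : ℝ)) * (α - β)
      = (mu * ((α * m - (n : ℝ)))) * (α - β) := by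
    push_cast
    linear_combination α * m * hA00 + α * (n : ℝ) * hA01 - (m : ℝ) * hA10 - (n : ℝ) * hA11
  have := mul_right_cancel₀ hne key
  rw [scoord, scoord, this, mul_div_assoc]

include hβα hAα0 hAα1 hAβ0 hAβ1 in
lemma nalpha_map (m n : ℤ) :
    ((a10 * m + a11 * n : ℤ) : ℝ) - α * ((a00 * m + a01 * n : ℤ) : ℝ)
      = mu * ((n : ℝ) - α * m) := by
  have h := scoord_map (a00 := a00) (a01 := a01) (a10 := a10) (a11 := a11)
    hβα hAα0 hAα1 hAβ0 hAβ1 m n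
  have hne : α - β ≠ 0 := by linarith
  rw [scoord, scoord] at h
  field_simp at h
  push_cast at h ⊢
  linarith [h]

end MatAction

end Aux

section MatAction2

variable {α β lam mu : ℝ} {a00 a01 a10 a11 : ℤ}
variable (hdet : a00 * a11 - a01 * a10 = 1)
variable (hβα : β < α)
variable (hAα0 : (a00 : ℝ) + a01 * α = lam) (hAα1 : (a10 : ℝ) + a11 * α = lam * α)
variable (hAβ0 : (a00 : ℝ) + a01 * β = mu) (hAβ1 : (a10 : ℝ) + a11 * β = mu * β)

lemma matHomeo_apply (hdet : a00 * a11 - a01 * a10 = 1) (p : ℝ × ℝ) :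
    matHomeo a00 a01 a10 a11 hdet p = ((a00 : ℝ) * p.1 + a01 * p.2, (a10 : ℝ) * p.1 + a11 * p.2) :=
  rfl

lemma matHomeo_symm_apply (hdet : a00 * a11 - a01 * a10 = 1) (p : ℝ × ℝ) :
    (matHomeo a00 a01 a10 a11 hdet).symm p
      = ((a11 : ℝ) * p.1 - a01 * p.2, -(a10 : ℝ) * p.1 + a00 * p.2) :=
  rfl

include hAα0 hAα1 hAβ0 hAβ1 in
lemma matHomeo_pt (a b : ℝ) :
    matHomeo a00 a01 a10 a11 hdet (a + b, a * α + b * β)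
      = (lam * a + mu * b, (lam * a) * α + (mu * b) * β) := by
  rw [matHomeo_apply]
  simp only [Prod.mk.injEq]
  constructor
  · linear_combination a * hAα0 + b * hAβ0
  · linear_combination a * hAα1 + b * hAβ1

include hdet hβα hAα0 hAα1 hAβ0 hAβ1 in
lemma Rpar_map (hlam0 : 0 < lam) (hmu0 : 0 < mu) (m n : ℤ) :
    Rpar α β (a00 * m + a01 * n) (a10 * m + a11 * n)
      = matHomeo a00 a01 a10 a11 hdet '' Rpar α β m n := by
  have ht := tcoord_map (a00 := a00) (a01 := a01) (a10 := a10) (a11 := a11)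
    hβα hAα0 hAα1 hAβ0 hAβ1 m n
  have hs := scoord_map (a00 := a00) (a01 := a01) (a10 := a10) (a11 := a11)
    hβα hAα0 hAα1 hAβ0 hAβ1 m n
  ext p
  constructor
  · rintro ⟨a', b', ha', hb', rfl⟩
    rw [ht] at ha'
    rw [hs] at hb'
    have ha2 : lam * (a' / lam) = a' := by field_simp
    have hb2 : mu * (b' / mu) = b' := by field_simp
    refine ⟨(a' / lam + b' / mu, (a' / lam) * α + (b' / mu) * β),
      ⟨a' / lam, b' / mu, ?_, ?_, rfl⟩, ?_⟩
    · exact (mul_uIcc_zero_iff hlam0).mp (by rw [ha2]; exact ha')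
    · exact (mul_uIcc_zero_iff hmu0).mp (by rw [hb2]; exact hb')
    · rw [matHomeo_pt hdet hAα0 hAα1 hAβ0 hAβ1, ha2, hb2]
  · rintro ⟨q, ⟨a, b, ha, hb, rfl⟩, rfl⟩
    refine ⟨lam * a, mu * b, ?_, ?_, ?_⟩
    · rw [ht]; exact (mul_uIcc_zero_iff hlam0).mpr ha
    · rw [hs]; exact (mul_uIcc_zero_iff hmu0).mpr hb
    · rw [matHomeo_pt hdet hAα0 hAα1 hAβ0 hAβ1]

include hdet hβα hAα0 hAα1 hAβ0 hAβ1 in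
lemma NLI_map (hlam0 : 0 < lam) (hmu0 : 0 < mu) (m n : ℤ)
    (h : NoLatticeInterior α β m n) :
    NoLatticeInterior α β (a00 * m + a01 * n) (a10 * m + a11 * n) := by
  intro p hp hex
  rw [Rpar_map hdet hβα hAα0 hAα1 hAβ0 hAβ1 hlam0 hmu0 m n,
    ← Homeomorph.image_interior] at hp
  obtain ⟨q, hq, rfl⟩ := hp
  obtain ⟨k, l, hkl⟩ := hex
  apply h q hq
  refine ⟨a11 * k - a01 * l, -(a10 * k) + a00 * l, ?_⟩
  have hq2 : q = (matHomeo a00 a01 a10 a11 hdet).symm ((k : ℝ), (l : ℝ)) := by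
    rw [← hkl]
    exact ((matHomeo a00 a01 a10 a11 hdet).symm_apply_apply q).symm
  rw [hq2, matHomeo_symm_apply]
  simp only [Prod.mk.injEq]
  constructor <;> push_cast <;> ring

include hdet hβα hAα0 hAα1 hAβ0 hAβ1 in
lemma NLI_map_rev (hlam0 : 0 < lam) (hmu0 : 0 < mu) (m n : ℤ)
    (h : NoLatticeInterior α β (a00 * m + a01 * n) (a10 * m + a11 * n)) :
    NoLatticeInterior α β m n := by
  intro q hq hex
  obtain ⟨k, l, rfl⟩ := hex
  have hmem : matHomeo a00 a01 a10 a11 hdet ((k : ℝ), (l : ℝ))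
      ∈ interior (Rpar α β (a00 * m + a01 * n) (a10 * m + a11 * n)) := by
    rw [Rpar_map hdet hβα hAα0 hAα1 hAβ0 hAβ1 hlam0 hmu0 m n,
      ← Homeomorph.image_interior]
    exact ⟨_, hq, rfl⟩
  apply h _ hmem
  refine ⟨a00 * k + a01 * l, a10 * k + a11 * l, ?_⟩
  rw [matHomeo_apply]
  simp only [Prod.mk.injEq]
  constructor <;> push_cast <;> ring

end MatAction2

section TsetAction

variable {α β lam mu : ℝ} {a00 a01 a10 a11 : ℤ}
variable (hdet : a00 * a11 - a01 * a10 = 1)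
variable (hβα : β < α)
variable (hAα0 : (a00 : ℝ) + a01 * α = lam) (hAα1 : (a10 : ℝ) + a11 * α = lam * α)
variable (hAβ0 : (a00 : ℝ) + a01 * β = mu) (hAβ1 : (a10 : ℝ) + a11 * β = mu * β)
variable (hlam0 : 0 < lam) (hmu0 : 0 < mu)

include hdet hβα hAα0 hAα1 hAβ0 hAβ1 hlam0 hmu0 in
lemma Tplus_mul {t : ℝ} (h : t ∈ Tplus α β) : lam * t ∈ Tplus α β := by
  obtain ⟨m, n, rfl, ht, hsign, hN⟩ := h
  refine ⟨a00 * m + a01 * n, a10 * m + a11 * n,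
    (tcoord_map hβα hAα0 hAα1 hAβ0 hAβ1 m n).symm, mul_pos hlam0 ht, ?_, ?_⟩
  · rw [nalpha_map hβα hAα0 hAα1 hAβ0 hAβ1 m n]
    exact mul_pos hmu0 hsign
  · exact NLI_map hdet hβα hAα0 hAα1 hAβ0 hAβ1 hlam0 hmu0 m n hN

include hdet hβα hAα0 hAα1 hAβ0 hAβ1 hlam0 hmu0 in
lemma Tminus_mul {t : ℝ} (h : t ∈ Tminus α β) : lam * t ∈ Tminus α β := by
  obtain ⟨m, n, rfl, ht, hsign, hN⟩ := h
  refine ⟨a00 * m + a01 * n, a10 * m + a11 * n,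
    (tcoord_map hβα hAα0 hAα1 hAβ0 hAβ1 m n).symm, mul_pos hlam0 ht, ?_, ?_⟩
  · rw [nalpha_map hβα hAα0 hAα1 hAβ0 hAβ1 m n]
    exact mul_neg_of_pos_of_neg hmu0 hsign
  · exact NLI_map hdet hβα hAα0 hAα1 hAβ0 hAβ1 hlam0 hmu0 m n hN

include hdet hβα hAα0 hAα1 hAβ0 hAβ1 hlam0 hmu0 in
lemma Tplus_div {t : ℝ} (h : t ∈ Tplus α β) : ∃ u ∈ Tplus α β, lam * u = t := by
  obtain ⟨m, n, rfl, ht, hsign, hN⟩ := h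
  set m' : ℤ := a11 * m - a01 * n with hm'
  set n' : ℤ := -(a10 * m) + a00 * n with hn'
  have e1 : a00 * m' + a01 * n' = m := by rw [hm', hn']; linear_combination m * hdet
  have e2 : a10 * m' + a11 * n' = n := by rw [hm', hn']; linear_combination n * hdet
  have htc : tcoord α β m n = lam * tcoord α β m' n' := by
    conv_lhs => rw [← e1, ← e2]
    exact tcoord_map hβα hAα0 hAα1 hAβ0 hAβ1 m' n'
  have hna : ((n : ℝ)) - α * m = mu * (((n' : ℤ) : ℝ) - α * m') := by
    conv_lhs => rw [show ((n : ℝ)) = ((a10 * m' + a11 * n' : ℤ) : ℝ) by rw [e2],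
      show ((m : ℝ)) = ((a00 * m' + a01 * n' : ℤ) : ℝ) by rw [e1]]
    exact nalpha_map hβα hAα0 hAα1 hAβ0 hAβ1 m' n'
  refine ⟨tcoord α β m' n', ⟨m', n', rfl, ?_, ?_, ?_⟩, htc.symm⟩
  · nlinarith [htc, ht, hlam0]
  · nlinarith [hna, hsign, hmu0]
  · refine NLI_map_rev hdet hβα hAα0 hAα1 hAβ0 hAβ1 hlam0 hmu0 m' n' ?_
    rw [e1, e2]; exact hN

include hdet hβα hAα0 hAα1 hAβ0 hAβ1 hlam0 hmu0 in
lemma Tminus_div {t : ℝ} (h : t ∈ Tminus α β) : ∃ u ∈ Tminus α β, lam * u = t := by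
  obtain ⟨m, n, rfl, ht, hsign, hN⟩ := h
  set m' : ℤ := a11 * m - a01 * n with hm'
  set n' : ℤ := -(a10 * m) + a00 * n with hn'
  have e1 : a00 * m' + a01 * n' = m := by rw [hm', hn']; linear_combination m * hdet
  have e2 : a10 * m' + a11 * n' = n := by rw [hm', hn']; linear_combination n * hdet
  have htc : tcoord α β m n = lam * tcoord α β m' n' := by
    conv_lhs => rw [← e1, ← e2]
    exact tcoord_map hβα hAα0 hAα1 hAβ0 hAβ1 m' n'
  have hna : ((n : ℝ)) - α * m = mu * (((n' : ℤ) : ℝ) - α * m') := by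
    conv_lhs => rw [show ((n : ℝ)) = ((a10 * m' + a11 * n' : ℤ) : ℝ) by rw [e2],
      show ((m : ℝ)) = ((a00 * m' + a01 * n' : ℤ) : ℝ) by rw [e1]]
    exact nalpha_map hβα hAα0 hAα1 hAβ0 hAβ1 m' n'
  refine ⟨tcoord α β m' n', ⟨m', n', rfl, ?_, ?_, ?_⟩, htc.symm⟩
  · nlinarith [htc, ht, hlam0]
  · nlinarith [hna, hsign, hmu0]
  · refine NLI_map_rev hdet hβα hAα0 hAα1 hAβ0 hAβ1 hlam0 hmu0 m' n' ?_
    rw [e1, e2]; exact hN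

end TsetAction

lemma Tset_pos {α β t : ℝ} (h : t ∈ Tset α β) : 0 < t := by
  rcases h with ⟨m, n, rfl, ht, _⟩ | ⟨m, n, rfl, ht, _⟩ <;> exact ht

section Irrat

variable {α β lam mu : ℝ} {a00 a01 a10 a11 : ℤ}

include a10 in
lemma mu_quadratic (hdet : a00 * a11 - a01 * a10 = 1)
    (hAβ0 : (a00 : ℝ) + a01 * β = mu) (hAβ1 : (a10 : ℝ) + a11 * β = mu * β) :
    mu ^ 2 - ((a00 + a11 : ℤ) : ℝ) * mu + 1 = 0 := by
  have hdetR : (a00 : ℝ) * a11 - a01 * a10 = 1 := by exact_mod_cast hdet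
  push_cast
  linear_combination (a11 - mu) * hAβ0 - a01 * hAβ1 - hdetR

lemma mu_irrational (hdet : a00 * a11 - a01 * a10 = 1)
    (hAβ0 : (a00 : ℝ) + a01 * β = mu) (hAβ1 : (a10 : ℝ) + a11 * β = mu * β)
    (hmu : 1 < mu) : Irrational mu := by
  rintro ⟨r, hr⟩
  set T : ℤ := a00 + a11 with hT
  have hquad := mu_quadratic hdet hAβ0 hAβ1
  rw [← hr] at hquad
  have hrq : r ^ 2 - (T : ℚ) * r + 1 = 0 := by exact_mod_cast hquad
  have hden : ((r.den : ℚ)) ≠ 0 := by exact_mod_cast r.den_nz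
  have hint : r.num ^ 2 - T * r.num * (r.den : ℤ) + (r.den : ℤ) ^ 2 = 0 := by
    have h2 : ((r.num : ℚ)) = r * r.den := (div_eq_iff hden).mp (Rat.num_div_den r)
    have : (r.num : ℚ) ^ 2 - (T : ℚ) * r.num * r.den + (r.den : ℚ) ^ 2 = 0 := by
      rw [h2]; linear_combination (r.den : ℚ) ^ 2 * hrq
    exact_mod_cast this
  have hdvd : (r.den : ℤ) ∣ r.num ^ 2 := ⟨T * r.num - r.den, by linear_combination hint⟩
  have hcop : IsCoprime (r.num ^ 2) ((r.den : ℤ)) := by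
    refine IsCoprime.pow_left ?_
    rw [Int.isCoprime_iff_gcd_eq_one]
    simpa [Int.gcd] using r.reduced
  have hunit : IsUnit ((r.den : ℤ)) := hcop.isUnit_of_dvd' hdvd dvd_rfl
  have hden1 : r.den = 1 := by
    rcases Int.isUnit_iff.mp hunit with h | h
    · exact_mod_cast h
    · exfalso; have : (0 : ℤ) < r.den := by exact_mod_cast r.den_pos
      omega
  have hrint : r = (r.num : ℚ) := by rw [← Rat.num_div_den r, hden1]; simp
  have hint2 : r.num ^ 2 - T * r.num + 1 = 0 := by
    have := hint; rw [hden1] at this; push_cast at this; linarith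
  have hdvd1 : r.num ∣ 1 := ⟨T - r.num, by linear_combination hint2⟩
  rcases Int.isUnit_iff.mp (isUnit_of_dvd_one hdvd1) with h | h <;>
    · rw [hrint, h] at hr; norm_num at hr; linarith

lemma beta_irrational (hdet : a00 * a11 - a01 * a10 = 1)
    (hAα0 : (a00 : ℝ) + a01 * α = lam)
    (hAβ0 : (a00 : ℝ) + a01 * β = mu) (hAβ1 : (a10 : ℝ) + a11 * β = mu * β)
    (hlam1 : lam < 1) (hmu : 1 < mu) : Irrational β := by
  have hmuirr := mu_irrational hdet hAβ0 hAβ1 hmu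
  rintro ⟨q, hq⟩
  have ha01 : a01 ≠ 0 := by
    rintro rfl
    simp only [Int.cast_zero, zero_mul, add_zero] at hAα0 hAβ0
    rw [hAα0] at hAβ0; linarith
  exact hmuirr ⟨(a00 : ℚ) + a01 * q, by push_cast; rw [hq]; exact hAβ0⟩

lemma T_disjoint {α β : ℝ} (hβα : β < α) (hirr : Irrational β) {t : ℝ}
    (h1 : t ∈ Tplus α β) (h2 : t ∈ Tminus α β) : False := by
  obtain ⟨m, n, he, _, hs1, _⟩ := h1
  obtain ⟨m', n', he', _, hs2, _⟩ := h2
  have hne : α - β ≠ 0 := by linarith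
  have hkey : ((n : ℝ)) - β * m = (n' : ℝ) - β * m' := by
    have := he.symm.trans he'
    rw [tcoord, tcoord, div_eq_div_iff hne hne] at this
    exact mul_right_cancel₀ hne this
  by_cases hm : m = m'
  · subst hm
    have : (n : ℝ) = (n' : ℝ) := by linarith
    have : n = n' := by exact_mod_cast this
    subst this
    linarith
  · apply hirr
    refine ⟨((n - n' : ℤ) : ℚ) / ((m - m' : ℤ) : ℚ), ?_⟩
    have hmm : ((m - m' : ℤ) : ℝ) ≠ 0 := by
      intro h; apply hm; have : (m : ℝ) = m' := by push_cast at h; linarith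
      exact_mod_cast this
    push_cast
    rw [div_eq_iff (by push_cast at hmm ⊢; exact hmm)]
    push_cast at hkey ⊢
    linarith

end Irrat

section Nonempty

variable {α β : ℝ}

lemma coord_repr (hβα : β < α) (m n : ℤ) :
    ((m : ℝ)) = tcoord α β m n + scoord α β m n ∧
    ((n : ℝ)) = tcoord α β m n * α + scoord α β m n * β := by
  have hne : α - β ≠ 0 := by linarith
  rw [tcoord, scoord]
  constructor <;> field_simp <;> ring

lemma exists_good (hβα : β < α) (m0 n0 : ℤ) (ε : ℝ) (hε : ε = 1 ∨ ε = -1)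
    (ht0 : 0 < tcoord α β m0 n0) (hs0 : 0 < ε * scoord α β m0 n0) :
    ∃ m n : ℤ, 0 < tcoord α β m n ∧ 0 < ε * scoord α β m n ∧ NoLatticeInterior α β m n := by
  set t0 := tcoord α β m0 n0 with ht0def
  set s0 := scoord α β m0 n0 with hs0def
  set F : Set (ℤ × ℤ) := {p | 0 < tcoord α β p.1 p.2 ∧ tcoord α β p.1 p.2 ≤ t0 ∧
    0 < ε * scoord α β p.1 p.2 ∧ ε * scoord α β p.1 p.2 ≤ ε * s0} with hF
  have hαβ : (0 : ℝ) < α - β := by linarith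
  set C : ℝ := (t0 + ε * s0) ⊔ (t0 * |α| + (ε * s0) * |β|) with hC
  set N : ℤ := ⌈C⌉ with hN
  have hCN : C ≤ (N : ℝ) := Int.le_ceil C
  have hfin : F.Finite := by
    refine Set.Finite.subset ((Set.finite_Icc (-N) N).prod (Set.finite_Icc (-N) N)) ?_
    rintro ⟨k, l⟩ ⟨h1, h2, h3, h4⟩
    obtain ⟨e1, e2⟩ := coord_repr hβα (α := α) (β := β) k l
    set t := tcoord α β k l
    set s := scoord α β k l
    have hsabs : |s| ≤ ε * s0 := by
      rcases hε with rfl | rfl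
      · rw [abs_le]; constructor <;> nlinarith
      · rw [abs_le]; constructor <;> nlinarith
    have htabs : |t| ≤ t0 := by rw [abs_le]; constructor <;> nlinarith
    have hk : |(k : ℝ)| ≤ C := by
      rw [e1]
      calc |t + s| ≤ |t| + |s| := abs_add_le _ _
        _ ≤ t0 + ε * s0 := by linarith
        _ ≤ C := le_max_left _ _
    have hl : |(l : ℝ)| ≤ C := by
      rw [e2]
      calc |t * α + s * β| ≤ |t| * |α| + |s| * |β| := by
            rw [← abs_mul, ← abs_mul]; exact abs_add_le _ _
        _ ≤ t0 * |α| + (ε * s0) * |β| := by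
            have := abs_nonneg α; have := abs_nonneg β
            have := abs_nonneg t; have := abs_nonneg s
            nlinarith
        _ ≤ C := le_max_right _ _
    rw [abs_le] at hk hl
    constructor
    · constructor
      · exact_mod_cast le_trans (by push_cast; linarith : ((-N : ℤ) : ℝ) ≤ (k : ℝ)) le_rfl
      · exact_mod_cast le_trans le_rfl (by push_cast; linarith : ((k : ℝ)) ≤ ((N : ℤ) : ℝ))
    · constructor
      · exact_mod_cast (by push_cast; linarith : ((-N : ℤ) : ℝ) ≤ (l : ℝ))
      · exact_mod_cast (by push_cast; linarith : ((l : ℝ)) ≤ ((N : ℤ) : ℝ))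
  have hne : F.Nonempty := ⟨(m0, n0), by
    refine ⟨ht0, le_refl _, hs0, le_refl _⟩⟩
  obtain ⟨⟨m, n⟩, hmF, hmin⟩ := Set.exists_min_image F (fun p => tcoord α β p.1 p.2) hfin hne
  obtain ⟨h1, h2, h3, h4⟩ := hmF
  refine ⟨m, n, h1, h3, ?_⟩
  intro p hp hex
  obtain ⟨k, l, rfl⟩ := hex
  rw [mem_interior_Rpar α β hβα m n] at hp
  obtain ⟨a, b, ha, hb, heq⟩ := hp
  have heq1 : ((k : ℝ)) = a + b := congrArg Prod.fst heq
  have heq2 : ((l : ℝ)) = a * α + b * β := congrArg Prod.snd heq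
  obtain ⟨hak, hbk⟩ := coords_unique α β hβα heq1 heq2
  have hta : tcoord α β k l = a := by rw [tcoord, hak]
  have hsb : scoord α β k l = b := by rw [scoord, hbk]
  have ht : 0 < tcoord α β m n := h1
  rw [inf_eq_left.mpr ht.le, sup_eq_right.mpr ht.le] at ha
  have hklF : (k, l) ∈ F := by
    refine ⟨by rw [hta]; exact ha.1, by rw [hta]; linarith [ha.2, h2], ?_, ?_⟩
    · rw [hsb]
      rcases hε with rfl | rfl
      · have hs : 0 < scoord α β m n := by linarith
        rw [inf_eq_left.mpr hs.le, sup_eq_right.mpr hs.le] at hb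
        simpa using hb.1
      · have hs : scoord α β m n < 0 := by nlinarith
        rw [inf_eq_right.mpr hs.le, sup_eq_left.mpr hs.le] at hb
        nlinarith [hb.2]
    · rw [hsb]
      rcases hε with rfl | rfl
      · have hs : 0 < scoord α β m n := by linarith
        rw [inf_eq_left.mpr hs.le, sup_eq_right.mpr hs.le] at hb
        simp only [one_mul] at h4 ⊢
        linarith [hb.2, h4]
      · have hs : scoord α β m n < 0 := by nlinarith
        rw [inf_eq_right.mpr hs.le, sup_eq_left.mpr hs.le] at hb
        nlinarith [hb.1, h4]
  have := hmin (k, l) hklF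
  simp only at this
  rw [hta] at this
  linarith [ha.1, ha.2, this]

lemma Tplus_nonempty (hβα : β < α) : (Tplus α β).Nonempty := by
  have hαβ : (0 : ℝ) < α - β := by linarith
  have ht0 : 0 < tcoord α β 0 1 := by
    have e : tcoord α β 0 1 = 1 / (α - β) := by rw [tcoord]; push_cast; ring
    rw [e]; positivity
  have hs0 : 0 < (-1 : ℝ) * scoord α β 0 1 := by
    have e : scoord α β 0 1 = -(1 / (α - β)) := by rw [scoord]; push_cast; ring
    rw [e]
    have : 0 < 1 / (α - β) := by positivity
    linarith
  obtain ⟨m, n, h1, h2, h3⟩ := exists_good hβα 0 1 (-1) (Or.inr rfl) ht0 hs0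
  refine ⟨tcoord α β m n, m, n, rfl, h1, ?_, h3⟩
  rw [scoord] at h2
  have : (α * m - (n : ℝ)) < 0 := by
    by_contra hc
    push_neg at hc
    have : 0 ≤ (α * m - (n : ℝ)) / (α - β) := div_nonneg hc hαβ.le
    nlinarith
  linarith

lemma Tminus_nonempty (hβα : β < α) : (Tminus α β).Nonempty := by
  have hαβ : (0 : ℝ) < α - β := by linarith
  obtain ⟨m, hm⟩ := exists_int_gt (1 / (α - β))
  set n : ℤ := ⌊β * m⌋ + 1 with hn
  have hn1 : β * m < n := by
    rw [hn]; push_cast; exact Int.lt_floor_add_one _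
  have hn2 : (n : ℝ) ≤ β * m + 1 := by
    rw [hn]; push_cast
    linarith [Int.floor_le (β * m)]
  have hm1 : 1 < (α - β) * m := by
    rw [div_lt_iff₀ hαβ] at hm
    linarith
  have hn3 : (n : ℝ) < α * m := by nlinarith
  have ht0 : 0 < tcoord α β m n := by
    rw [tcoord]; apply div_pos <;> linarith
  have hs0 : 0 < (1 : ℝ) * scoord α β m n := by
    rw [one_mul, scoord]; apply div_pos <;> linarith
  obtain ⟨m', n', h1, h2, h3⟩ := exists_good hβα m n 1 (Or.inl rfl) ht0 hs0
  refine ⟨tcoord α β m' n', m', n', rfl, h1, ?_, h3⟩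
  rw [one_mul, scoord] at h2
  have : 0 < α * m' - (n' : ℝ) := by
    by_contra hc
    push_neg at hc
    have : (α * m' - (n' : ℝ)) / (α - β) ≤ 0 := div_nonpos_of_nonpos_of_nonneg hc hαβ.le
    linarith
  linarith

end Nonempty

section Combinatorics

lemma int_shift {g : ℤ → ℤ} (hmono : StrictMono g) (hsurj : Function.Surjective g) :
    ∀ j : ℤ, g j = j + g 0 := by
  have hstep : ∀ i : ℤ, g (i + 1) = g i + 1 := by
    intro i
    obtain ⟨k, hk⟩ := hsurj (g i + 1)
    have h1 : g i < g (i + 1) := hmono (by omega)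
    rcases lt_trichotomy k (i + 1) with h | h | h
    · have hki : k ≤ i := by omega
      have := hmono.le_iff_le.mpr hki
      omega
    · subst h; omega
    · have := hmono h
      omega
  intro j
  induction j using Int.induction_on with
  | zero => omega
  | succ i ih => rw [hstep i]; omega
  | pred i ih =>
      have := hstep (-(i : ℤ) - 1)
      have h2 : (-(i : ℤ) - 1 + 1) = -(i : ℤ) := by ring
      rw [h2] at this
      omega

lemma exists_large_mem {P : Set ℝ} {lam : ℝ} (hlam0 : 0 < lam) (hlam1 : lam < 1)
    (hdiv : ∀ t ∈ P, ∃ u ∈ P, lam * u = t) (hpos : ∀ t ∈ P, 0 < t)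
    (hne : P.Nonempty) (M : ℝ) : ∃ v ∈ P, M < v := by
  obtain ⟨u, hu⟩ := hne
  have hupos := hpos u hu
  have hiter : ∀ k : ℕ, ∃ v ∈ P, lam ^ k * v = u := by
    intro k
    induction k with
    | zero => exact ⟨u, hu, by simp⟩
    | succ k ih =>
        obtain ⟨v, hv, hvk⟩ := ih
        obtain ⟨w, hw, hwv⟩ := hdiv v hv
        exact ⟨w, hw, by
          rw [show lam ^ (k + 1) * w = lam ^ k * (lam * w) by ring, hwv, hvk]⟩
  rcases le_or_gt M 0 with hM | hM
  · exact ⟨u, hu, lt_of_le_of_lt hM hupos⟩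
  · obtain ⟨k, hk⟩ := exists_pow_lt_of_lt_one (div_pos hupos hM) hlam1
    obtain ⟨v, hv, hvk⟩ := hiter k
    refine ⟨v, hv, ?_⟩
    have hvpos := hpos v hv
    by_contra hc
    push_neg at hc
    have hkpos : 0 < lam ^ k := pow_pos hlam0 k
    have h1 : lam ^ k * v ≤ lam ^ k * M := by nlinarith
    have h2 : lam ^ k * M < (u / M) * M := by nlinarith
    have h3 : (u / M) * M = u := div_mul_cancel₀ _ hM.ne'
    linarith [hvk, h1, h2, h3]

lemma exists_small_mem {P : Set ℝ} {lam : ℝ} (hlam0 : 0 < lam) (hlam1 : lam < 1)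
    (hmul : ∀ t ∈ P, lam * t ∈ P) (hpos : ∀ t ∈ P, 0 < t)
    (hne : P.Nonempty) (ε : ℝ) (hε : 0 < ε) : ∃ v ∈ P, v < ε := by
  obtain ⟨u, hu⟩ := hne
  have hupos := hpos u hu
  have hiter : ∀ k : ℕ, lam ^ k * u ∈ P := by
    intro k
    induction k with
    | zero => simpa using hu
    | succ k ih =>
        have := hmul _ ih
        rw [← mul_assoc, mul_comm lam (lam ^ k), ← pow_succ] at this
        exact this
  obtain ⟨k, hk⟩ := exists_pow_lt_of_lt_one (div_pos hε hupos) hlam1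
  refine ⟨lam ^ k * u, hiter k, ?_⟩
  have : lam ^ k * u < (ε / u) * u := by nlinarith [pow_pos hlam0 k]
  rwa [div_mul_cancel₀ _ hupos.ne'] at this

lemma run_finite {α β : ℝ} (hβα : β < α) (hirr : Irrational β)
    (hPlarge : ∀ M : ℝ, ∃ v ∈ Tplus α β, M < v)
    (hPsmall : ∀ ε : ℝ, 0 < ε → ∃ v ∈ Tplus α β, v < ε)
    (hMlarge : ∀ M : ℝ, ∃ v ∈ Tminus α β, M < v)
    (hMsmall : ∀ ε : ℝ, 0 < ε → ∃ v ∈ Tminus α β, v < ε)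
    (e : ℤ ≃o ↥(Tset α β)) (S : Set ℤ) (hS : IsRun α β e S) : S.Finite := by
  obtain ⟨hne, hconn, hcase⟩ := hS
  by_contra hinf
  obtain ⟨j₀, hj₀⟩ := hne
  have hmain : (∀ j, j₀ ≤ j → j ∈ S) ∨ (∀ j, j ≤ j₀ → j ∈ S) := by
    by_cases hba : BddAbove S
    · by_cases hbb : BddBelow S
      · exfalso
        apply hinf
        obtain ⟨hi, hhi⟩ := hba
        obtain ⟨lo, hlo⟩ := hbb
        exact Set.Finite.subset (Set.finite_Icc lo hi) (fun x hx => ⟨hlo hx, hhi hx⟩)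
      · right
        intro j hj
        rw [not_bddBelow_iff] at hbb
        obtain ⟨k, hk, hkj⟩ := hbb j
        exact hconn.out hk hj₀ ⟨hkj.le, hj⟩
    · left
      intro j hj
      rw [not_bddAbove_iff] at hba
      obtain ⟨k, hk, hjk⟩ := hba j
      exact hconn.out hj₀ hk ⟨hj, hjk.le⟩
  have hpos0 : (0 : ℝ) < ((e j₀ : ℝ)) := Tset_pos (e j₀).2
  rcases hcase with hdir | hdir
  · -- all elements in Tminus; find a Tplus element inside S
    rcases hmain with hup | hdown
    · obtain ⟨v, hv, hlt⟩ := hPlarge ((e j₀ : ℝ))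
      have hv' : v ∈ Tset α β := Or.inl hv
      have hei : ((e (e.symm ⟨v, hv'⟩) : ℝ)) = v := by rw [e.apply_symm_apply]
      have hji : j₀ < e.symm ⟨v, hv'⟩ := by
        apply e.lt_iff_lt.mp
        rw [← Subtype.coe_lt_coe, hei]
        exact hlt
      have hmem : ((e (e.symm ⟨v, hv'⟩) : ℝ)) ∈ Tplus α β := by rw [hei]; exact hv
      exact T_disjoint hβα hirr hmem (hdir _ (hup _ hji.le))
    · obtain ⟨v, hv, hlt⟩ := hPsmall _ hpos0
      have hv' : v ∈ Tset α β := Or.inl hv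
      have hei : ((e (e.symm ⟨v, hv'⟩) : ℝ)) = v := by rw [e.apply_symm_apply]
      have hji : e.symm ⟨v, hv'⟩ < j₀ := by
        apply e.lt_iff_lt.mp
        rw [← Subtype.coe_lt_coe, hei]
        exact hlt
      have hmem : ((e (e.symm ⟨v, hv'⟩) : ℝ)) ∈ Tplus α β := by rw [hei]; exact hv
      exact T_disjoint hβα hirr hmem (hdir _ (hdown _ hji.le))
  · -- all elements in Tplus; find a Tminus element inside S
    rcases hmain with hup | hdown
    · obtain ⟨v, hv, hlt⟩ := hMlarge ((e j₀ : ℝ))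
      have hv' : v ∈ Tset α β := Or.inr hv
      have hei : ((e (e.symm ⟨v, hv'⟩) : ℝ)) = v := by rw [e.apply_symm_apply]
      have hji : j₀ < e.symm ⟨v, hv'⟩ := by
        apply e.lt_iff_lt.mp
        rw [← Subtype.coe_lt_coe, hei]
        exact hlt
      have hmem : ((e (e.symm ⟨v, hv'⟩) : ℝ)) ∈ Tminus α β := by rw [hei]; exact hv
      exact T_disjoint hβα hirr (hdir _ (hup _ hji.le)) hmem
    · obtain ⟨v, hv, hlt⟩ := hMsmall _ hpos0
      have hv' : v ∈ Tset α β := Or.inr hv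
      have hei : ((e (e.symm ⟨v, hv'⟩) : ℝ)) = v := by rw [e.apply_symm_apply]
      have hji : e.symm ⟨v, hv'⟩ < j₀ := by
        apply e.lt_iff_lt.mp
        rw [← Subtype.coe_lt_coe, hei]
        exact hlt
      have hmem : ((e (e.symm ⟨v, hv'⟩) : ℝ)) ∈ Tminus α β := by rw [hei]; exact hv
      exact T_disjoint hβα hirr (hdir _ (hdown _ hji.le)) hmem

end Combinatorics

/-- Every maximal run of `T` is finite, the map `t ↦ λ·t` is a strictly
increasing bijection of `T` onto itself mapping `T⁻` onto `T⁻` and `T⁺` onto `T⁺`, and for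
any increasing enumeration `(R_j)` of the maximal runs there is a nonzero integer `d` with
`λ·R_j = R_{j+d}` for every `j`; in particular the run-length sequence `(b_j)` satisfies
`b_{j+d} = b_j` for all `j`, i.e. it is periodic. -/
theorem stmt12 (A : Matrix (Fin 2) (Fin 2) ℤ) (hdet : A.det = 1)
    (lam mu α β : ℝ)
    (hlam0 : 0 < lam) (hlam1 : lam < 1) (hmu : 1 < mu)
    (hAα0 : (A 0 0 : ℝ) + A 0 1 * α = lam)
    (hAα1 : (A 1 0 : ℝ) + A 1 1 * α = lam * α)
    (hAβ0 : (A 0 0 : ℝ) + A 0 1 * β = mu)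
    (hAβ1 : (A 1 0 : ℝ) + A 1 1 * β = mu * β)
    (hβα : β < α) (hα : 0 < α) :
    (∀ (e : ℤ ≃o ↥(Tset α β)) (S : Set ℤ), IsMaxRun α β e S → S.Finite) ∧
    StrictMonoOn (fun t : ℝ => lam * t) (Tset α β) ∧
    Set.BijOn (fun t : ℝ => lam * t) (Tset α β) (Tset α β) ∧
    Set.BijOn (fun t : ℝ => lam * t) (Tminus α β) (Tminus α β) ∧
    Set.BijOn (fun t : ℝ => lam * t) (Tplus α β) (Tplus α β) ∧
    (∀ (e : ℤ ≃o ↥(Tset α β)) (ρ : ℤ → Set ℤ), IsRunEnum α β e ρ →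
      ∃ d : ℤ, d ≠ 0 ∧
        (∀ j : ℤ,
          (fun t : ℝ => lam * t) '' ((fun i : ℤ => (e i : ℝ)) '' ρ j) =
            (fun i : ℤ => (e i : ℝ)) '' ρ (j + d)) ∧
        (∀ j : ℤ, (ρ (j + d)).ncard = (ρ j).ncard)) := by
  have hdet2 : A 0 0 * A 1 1 - A 0 1 * A 1 0 = 1 := by
    rw [← Matrix.det_fin_two A]; exact hdet
  have hmu0 : (0 : ℝ) < mu := by linarith
  have hirr : Irrational β := beta_irrational hdet2 hAα0 hAβ0 hAβ1 hlam1 hmu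
  have hPmul : ∀ t ∈ Tplus α β, lam * t ∈ Tplus α β :=
    fun t ht => Tplus_mul hdet2 hβα hAα0 hAα1 hAβ0 hAβ1 hlam0 hmu0 ht
  have hMmul : ∀ t ∈ Tminus α β, lam * t ∈ Tminus α β :=
    fun t ht => Tminus_mul hdet2 hβα hAα0 hAα1 hAβ0 hAβ1 hlam0 hmu0 ht
  have hPdiv : ∀ t ∈ Tplus α β, ∃ u ∈ Tplus α β, lam * u = t :=
    fun t ht => Tplus_div hdet2 hβα hAα0 hAα1 hAβ0 hAβ1 hlam0 hmu0 ht
  have hMdiv : ∀ t ∈ Tminus α β, ∃ u ∈ Tminus α β, lam * u = t :=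
    fun t ht => Tminus_div hdet2 hβα hAα0 hAα1 hAβ0 hAβ1 hlam0 hmu0 ht
  have hSmul : ∀ t ∈ Tset α β, lam * t ∈ Tset α β := by
    rintro t (ht | ht)
    · exact Or.inl (hPmul t ht)
    · exact Or.inr (hMmul t ht)
  have hSdiv : ∀ t ∈ Tset α β, ∃ u ∈ Tset α β, lam * u = t := by
    rintro t (ht | ht)
    · obtain ⟨u, hu, hl⟩ := hPdiv t ht; exact ⟨u, Or.inl hu, hl⟩
    · obtain ⟨u, hu, hl⟩ := hMdiv t ht; exact ⟨u, Or.inr hu, hl⟩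
  have hPpos : ∀ t ∈ Tplus α β, (0 : ℝ) < t := fun t ht => Tset_pos (Or.inl ht)
  have hMpos : ∀ t ∈ Tminus α β, (0 : ℝ) < t := fun t ht => Tset_pos (Or.inr ht)
  have hPne := Tplus_nonempty hβα
  have hMne := Tminus_nonempty hβα
  have hPlarge : ∀ M : ℝ, ∃ v ∈ Tplus α β, M < v :=
    fun M => exists_large_mem hlam0 hlam1 hPdiv hPpos hPne M
  have hPsmall : ∀ ε : ℝ, 0 < ε → ∃ v ∈ Tplus α β, v < ε :=
    fun ε hε => exists_small_mem hlam0 hlam1 hPmul hPpos hPne ε hε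
  have hMlarge : ∀ M : ℝ, ∃ v ∈ Tminus α β, M < v :=
    fun M => exists_large_mem hlam0 hlam1 hMdiv hMpos hMne M
  have hMsmall : ∀ ε : ℝ, 0 < ε → ∃ v ∈ Tminus α β, v < ε :=
    fun ε hε => exists_small_mem hlam0 hlam1 hMmul hMpos hMne ε hε
  have hfinrun : ∀ (e : ℤ ≃o ↥(Tset α β)) (S : Set ℤ), IsRun α β e S → S.Finite :=
    fun e S h => run_finite hβα hirr hPlarge hPsmall hMlarge hMsmall e S h
  have hMiff : ∀ t : ℝ, lam * t ∈ Tminus α β ↔ t ∈ Tminus α β := by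
    intro t
    constructor
    · intro h
      obtain ⟨u, hu, hlu⟩ := hMdiv _ h
      have : u = t := mul_left_cancel₀ hlam0.ne' hlu
      exact this ▸ hu
    · exact fun h => hMmul _ h
  have hPiff : ∀ t : ℝ, lam * t ∈ Tplus α β ↔ t ∈ Tplus α β := by
    intro t
    constructor
    · intro h
      obtain ⟨u, hu, hlu⟩ := hPdiv _ h
      have : u = t := mul_left_cancel₀ hlam0.ne' hlu
      exact this ▸ hu
    · exact fun h => hPmul t h
  refine ⟨fun e S hS => hfinrun e S hS.1, ?_, ?_, ?_, ?_, ?_⟩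
  · intro x _ y _ hxy
    exact mul_lt_mul_of_pos_left hxy hlam0
  · exact ⟨fun t ht => hSmul t ht, fun x _ y _ h => mul_left_cancel₀ hlam0.ne' h,
      fun t ht => by obtain ⟨u, hu, hl⟩ := hSdiv t ht; exact ⟨u, hu, hl⟩⟩
  · exact ⟨fun t ht => hMmul t ht, fun x _ y _ h => mul_left_cancel₀ hlam0.ne' h,
      fun t ht => by obtain ⟨u, hu, hl⟩ := hMdiv t ht; exact ⟨u, hu, hl⟩⟩
  · exact ⟨fun t ht => hPmul t ht, fun x _ y _ h => mul_left_cancel₀ hlam0.ne' h,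
      fun t ht => by obtain ⟨u, hu, hl⟩ := hPdiv t ht; exact ⟨u, hu, hl⟩⟩
  -- Part 6
  intro e ρ hρ
  obtain ⟨hρ1, hρ2, hρ3⟩ := hρ
  have hmemg : ∀ j : ℤ, lam * ((e j : ℝ)) ∈ Tset α β := fun j => hSmul _ (e j).2
  set g : ℤ → ℤ := fun j => e.symm ⟨lam * ((e j : ℝ)), hmemg j⟩ with hgdef
  have hg : ∀ j, ((e (g j) : ℝ)) = lam * ((e j : ℝ)) := by
    intro j
    rw [hgdef]
    simp only []
    rw [e.apply_symm_apply]
  have hgmono : StrictMono g := by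
    intro i j hij
    apply e.lt_iff_lt.mp
    rw [← Subtype.coe_lt_coe, hg i, hg j]
    exact mul_lt_mul_of_pos_left (Subtype.coe_lt_coe.mpr (e.lt_iff_lt.mpr hij)) hlam0
  have hgsurj : Function.Surjective g := by
    intro i
    obtain ⟨u, hu, hlu⟩ := hSdiv _ (e i).2
    refine ⟨e.symm ⟨u, hu⟩, ?_⟩
    apply e.injective
    apply Subtype.ext
    rw [hg, e.apply_symm_apply]
    exact hlu
  set c : ℤ := g 0 with hc
  have hgc : ∀ j, g j = j + c := int_shift hgmono hgsurj
  have hcneg : c < 0 := by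
    have h0 := hg 0
    have hp : (0 : ℝ) < ((e 0 : ℝ)) := Tset_pos (e 0).2
    have hlt : ((e (g 0) : ℝ)) < ((e 0 : ℝ)) := by rw [h0]; nlinarith
    have := e.lt_iff_lt.mp (Subtype.coe_lt_coe.mp hlt)
    rw [hc]
    exact this
  have hec : ∀ j, ((e (j + c) : ℝ)) = lam * ((e j : ℝ)) := fun j => by
    rw [← hgc j]; exact hg j
  -- generic run shift
  have hrun_shift_gen : ∀ (c' : ℤ) (f : ℝ),
      (∀ j, ((e (j + c') : ℝ)) = f * ((e j : ℝ))) →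
      (∀ t : ℝ, f * t ∈ Tminus α β ↔ t ∈ Tminus α β) →
      (∀ t : ℝ, f * t ∈ Tplus α β ↔ t ∈ Tplus α β) →
      ∀ S : Set ℤ, (IsRun α β e ((fun j => j + c') '' S) ↔ IsRun α β e S) := by
    intro c' f hecf hMi hPi S
    constructor
    · rintro ⟨hne, hconn, hcase⟩
      refine ⟨?_, ?_, ?_⟩
      · obtain ⟨x, hx⟩ := hne
        obtain ⟨j, hj, _⟩ := hx
        exact ⟨j, hj⟩
      · constructor
        intro x hx y hy z hz
        obtain ⟨hz1, hz2⟩ := hz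
        have hz' : z + c' ∈ (fun j => j + c') '' S := by
          apply hconn.out (Set.mem_image_of_mem _ hx) (Set.mem_image_of_mem _ hy)
          exact ⟨by omega, by omega⟩
        obtain ⟨w, hw, hwz⟩ := hz'
        have hwz2 : w + c' = z + c' := hwz
        have hwzeq : w = z := by omega
        exact hwzeq ▸ hw
      · rcases hcase with hcc | hcc
        · left
          intro j hj
          have := hcc (j + c') (Set.mem_image_of_mem _ hj)
          rw [hecf j] at this
          exact (hMi _).mp this
        · right
          intro j hj
          have := hcc (j + c') (Set.mem_image_of_mem _ hj)
          rw [hecf j] at this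
          exact (hPi _).mp this
    · rintro ⟨hne, hconn, hcase⟩
      refine ⟨hne.image _, ?_, ?_⟩
      · constructor
        intro x hx y hy z hz
        obtain ⟨a, ha, hax⟩ := hx
        obtain ⟨b, hb, hby⟩ := hy
        have hax2 : a + c' = x := hax
        have hby2 : b + c' = y := hby
        obtain ⟨hz1, hz2⟩ := hz
        refine ⟨z - c', hconn.out ha hb ⟨by omega, by omega⟩, ?_⟩
        show z - c' + c' = z
        omega
      · rcases hcase with hcc | hcc
        · left
          rintro x ⟨j, hj, rfl⟩
          rw [hecf j]
          exact (hMi _).mpr (hcc j hj)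
        · right
          rintro x ⟨j, hj, rfl⟩
          rw [hecf j]
          exact (hPi _).mpr (hcc j hj)
  have hmax_shift_gen : ∀ (c' : ℤ),
      (∀ S : Set ℤ, IsRun α β e ((fun j => j + c') '' S) ↔ IsRun α β e S) →
      (∀ S : Set ℤ, IsRun α β e ((fun j => j + (-c')) '' S) ↔ IsRun α β e S) →
      ∀ S, IsMaxRun α β e S → IsMaxRun α β e ((fun j => j + c') '' S) := by
    intro c' hiff hiff' S hS
    obtain ⟨hrun, hmax⟩ := hS
    refine ⟨(hiff S).mpr hrun, ?_⟩
    intro S' hS' hsub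
    have h1 : (fun j => j + c') '' ((fun j => j + (-c')) '' S') = S' := by
      rw [Set.image_image]
      have hfun : (fun x : ℤ => x + -c' + c') = id := by funext x; show x + -c' + c' = x; omega
      rw [hfun, Set.image_id]
    have hS'' : IsRun α β e ((fun j => j + (-c')) '' S') := by
      apply (hiff ((fun j => j + (-c')) '' S')).mp
      rw [h1]
      exact hS'
    have heq := hmax _ hS'' (by
      intro x hx
      exact ⟨x + c', hsub (Set.mem_image_of_mem _ hx), show x + c' + -c' = x from by omega⟩)
    rw [← heq]
    exact h1.symm
  have hiffc := hrun_shift_gen c lam hec hMiff hPiff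
  have hec' : ∀ j, ((e (j + (-c)) : ℝ)) = lam⁻¹ * ((e j : ℝ)) := by
    intro j
    have h1 := hec (j + (-c))
    rw [show j + (-c) + c = j from by omega] at h1
    rw [h1, inv_mul_cancel_left₀ hlam0.ne']
  have hMiff' : ∀ t : ℝ, lam⁻¹ * t ∈ Tminus α β ↔ t ∈ Tminus α β := by
    intro t
    have h1 := hMiff (lam⁻¹ * t)
    rw [mul_inv_cancel_left₀ hlam0.ne'] at h1
    exact h1.symm
  have hPiff' : ∀ t : ℝ, lam⁻¹ * t ∈ Tplus α β ↔ t ∈ Tplus α β := by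
    intro t
    have h1 := hPiff (lam⁻¹ * t)
    rw [mul_inv_cancel_left₀ hlam0.ne'] at h1
    exact h1.symm
  have hiffnc := hrun_shift_gen (-c) lam⁻¹ hec' hMiff' hPiff'
  have hiffnnc : ∀ S : Set ℤ, IsRun α β e ((fun j => j + (-(-c))) '' S) ↔ IsRun α β e S := by
    intro S
    rw [neg_neg]
    exact hiffc S
  have hmaxc := hmax_shift_gen c hiffc hiffnc
  have hmaxnc := hmax_shift_gen (-c) hiffnc hiffnnc
  have hshift_ex : ∀ j, ∃ i, ρ i = (fun x => x + c) '' ρ j :=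
    fun j => hρ2 _ (hmaxc (ρ j) (hρ1 j))
  have ρinj : ∀ i i', ρ i = ρ i' → i = i' := by
    intro i i' h
    by_contra hne'
    obtain ⟨x, hx⟩ := (hρ1 i).1.1
    rcases lt_or_gt_of_ne hne' with hlt | hlt
    · exact absurd (hρ3 i i' hlt x hx x (h ▸ hx)) (lt_irrefl x)
    · exact absurd (hρ3 i' i hlt x (h ▸ hx) x hx) (lt_irrefl x)
  choose σ hσ using hshift_ex
  have hσmono : StrictMono σ := by
    intro i j hij
    obtain ⟨x, hx⟩ := (hρ1 (σ i)).1.1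
    obtain ⟨y, hy⟩ := (hρ1 (σ j)).1.1
    rw [hσ i] at hx
    rw [hσ j] at hy
    obtain ⟨a, ha, rfl⟩ := hx
    obtain ⟨b, hb, rfl⟩ := hy
    rcases lt_trichotomy (σ i) (σ j) with h | h | h
    · exact h
    · exfalso
      have hx' : a + c ∈ ρ (σ j) := by rw [← h, hσ i]; exact ⟨a, ha, rfl⟩
      rw [hσ j] at hx'
      obtain ⟨a', ha', he'⟩ := hx'
      have he2 : a' + c = a + c := he'
      have haa : a' = a := by omega
      subst haa
      exact absurd (hρ3 i j hij a' ha a' ha') (lt_irrefl _)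
    · exfalso
      have := hρ3 _ _ h (b + c) (by rw [hσ j]; exact ⟨b, hb, rfl⟩)
        (a + c) (by rw [hσ i]; exact ⟨a, ha, rfl⟩)
      have hab : a < b := hρ3 i j hij a ha b hb
      omega
  have hσsurj : Function.Surjective σ := by
    intro i
    have hmax' : IsMaxRun α β e ((fun j => j + (-c)) '' ρ i) := hmaxnc (ρ i) (hρ1 i)
    obtain ⟨j, hj⟩ := hρ2 _ hmax'
    refine ⟨j, ρinj _ _ ?_⟩
    rw [hσ j, hj, Set.image_image]
    have hfun : (fun x : ℤ => x + -c + c) = id := by funext x; show x + -c + c = x; omega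
    rw [hfun, Set.image_id]
  set d := σ 0 with hd
  have hσd : ∀ j, σ j = j + d := int_shift hσmono hσsurj
  have hdne : d ≠ 0 := by
    intro h0
    have h1 : ρ 0 = (fun x => x + c) '' ρ 0 := by
      have h2 := hσ 0
      rw [show σ 0 = 0 from hd ▸ h0] at h2
      exact h2
    have hfin0 : (ρ 0).Finite := hfinrun e (ρ 0) (hρ1 0).1
    obtain ⟨x, hx, hmax'⟩ := Set.exists_max_image (ρ 0) id hfin0 (hρ1 0).1.1
    have hx2 : x ∈ (fun x => x + c) '' ρ 0 := h1 ▸ hx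
    obtain ⟨a, ha, hax⟩ := hx2
    have hax2 : a + c = x := hax
    have := hmax' a ha
    simp only [id] at this
    omega
  refine ⟨d, hdne, ?_, ?_⟩
  · intro j
    have hρjd : ρ (j + d) = (fun x => x + c) '' ρ j := by rw [← hσd j]; exact hσ j
    ext x
    constructor
    · rintro ⟨y, ⟨i, hi, rfl⟩, rfl⟩
      refine ⟨i + c, ?_, ?_⟩
      · rw [hρjd]; exact ⟨i, hi, rfl⟩
      · exact hec i
    · rintro ⟨k, hk, rfl⟩
      rw [hρjd] at hk
      obtain ⟨i, hi, rfl⟩ := hk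
      exact ⟨(e i : ℝ), ⟨i, hi, rfl⟩, (hec i).symm⟩
  · intro j
    have hρjd : ρ (j + d) = (fun x => x + c) '' ρ j := by rw [← hσd j]; exact hσ j
    rw [hρjd]
    exact Set.ncard_image_of_injective _ (add_left_injective c)
end

section
/- Let A, B ∈ SL(2,ℤ) with trace(A) > 2 and trace(B) > 2, and let u_A, u_B ∈ ℝ be the slopes of their expanding eigenspaces, i.e. A·(1,u_A)ᵀ = μ_A·(1,u_A)ᵀ and B·(1,u_B)ᵀ = μ_B·(1,u_B)ᵀ with μ_A > 1 and μ_B > 1 (u_A and u_B are then irrational). Let |u_A| = [a₀; a₁, a₂, …] and |u_B| = [b₀; b₁, b₂, …] be the continued fraction expansions of |u_A| and |u_B|. If there exist integers m, n ≥ 0 such that a_{m+i} = b_{n+i} for all i ≥ 0, then there exist nonzero integers k, l and a matrix C ∈ GL(2,ℤ) such that C·Aᵏ·C⁻¹ = Bˡ or C·Aᵏ·C⁻¹ = −Bˡ. -/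
set_option maxHeartbeats 1000000


/-- `a : ℕ → ℤ` is the sequence of partial quotients of the continued fraction expansion of
`x`, given by the Gauss map: there is a sequence `v` of complete quotients with `v 0 = x`,
`a k = ⌊v k⌋` and `v (k+1) = 1/(v k − ⌊v k⌋)`. -/
def GaussCF (x : ℝ) (a : ℕ → ℤ) : Prop :=
  ∃ v : ℕ → ℝ, v 0 = x ∧ ∀ k : ℕ, a k = ⌊v k⌋ ∧ v (k + 1) = (v k - ⌊v k⌋)⁻¹

open Matrix Real


namespace Stmt15

/-- cast of an integer matrix to a real matrix, as a ring hom -/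
noncomputable def φ : Matrix (Fin 2) (Fin 2) ℤ →+* Matrix (Fin 2) (Fin 2) ℝ :=
  (Int.castRingHom ℝ).mapMatrix

lemma phi_apply (M : Matrix (Fin 2) (Fin 2) ℤ) (i j : Fin 2) : φ M i j = (M i j : ℝ) := rfl

lemma phi_smul (z : ℤ) (M : Matrix (Fin 2) (Fin 2) ℤ) : φ (z • M) = (z : ℝ) • φ M := by
  ext i j
  simp only [phi_apply, Matrix.smul_apply, smul_eq_mul]
  push_cast
  ring

lemma int_lin_indep {u : ℝ} (hu : Irrational u) {p q : ℤ}
    (h : (p : ℝ) + (q : ℝ) * u = 0) : p = 0 ∧ q = 0 := by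
  by_cases hq : q = 0
  · subst hq; simp at h; exact ⟨by exact_mod_cast h, rfl⟩
  · exfalso
    have hu' : u = ((-p / q : ℚ) : ℝ) := by
      have hq' : (q : ℝ) ≠ 0 := Int.cast_ne_zero.mpr hq
      push_cast
      field_simp
      linarith
    exact hu ⟨-p / q, hu'.symm⟩

/-- rigidity : two integer matrices sending `(1,u)` to the same vector are equal. -/
lemma matrix_eq_of_mulVec_eq {u : ℝ} (hu : Irrational u)
    {M N : Matrix (Fin 2) (Fin 2) ℤ}
    (h : φ M *ᵥ ![1, u] = φ N *ᵥ ![1, u]) : M = N := by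
  have h0 := congrFun h 0
  have h1 := congrFun h 1
  simp [Matrix.mulVec, dotProduct, Fin.sum_univ_two, phi_apply] at h0 h1
  have e0 : ((M 0 0 - N 0 0 : ℤ) : ℝ) + ((M 0 1 - N 0 1 : ℤ) : ℝ) * u = 0 := by
    push_cast; linarith
  have e1 : ((M 1 0 - N 1 0 : ℤ) : ℝ) + ((M 1 1 - N 1 1 : ℤ) : ℝ) * u = 0 := by
    push_cast; linarith
  obtain ⟨a0, a1⟩ := int_lin_indep hu e0
  obtain ⟨b0, b1⟩ := int_lin_indep hu e1
  ext i j
  fin_cases i <;> fin_cases j <;> simp only [Fin.zero_eta, Fin.mk_one, Fin.isValue] <;> omega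


/-- Möbius-type relation between reals via an integer matrix. -/
def Rel (M : Matrix (Fin 2) (Fin 2) ℤ) (x y : ℝ) : Prop :=
  ∃ c : ℝ, c ≠ 0 ∧ φ M *ᵥ ![1, x] = c • ![1, y]

lemma rel_one (x : ℝ) : Rel 1 x x :=
  ⟨1, one_ne_zero, by simp⟩

lemma rel_comp {M N : Matrix (Fin 2) (Fin 2) ℤ} {x y z : ℝ}
    (hM : Rel M x y) (hN : Rel N y z) : Rel (N * M) x z := by
  obtain ⟨c, hc, h1⟩ := hM
  obtain ⟨d, hd, h2⟩ := hN
  refine ⟨d * c, mul_ne_zero hd hc, ?_⟩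
  rw [_root_.map_mul, ← Matrix.mulVec_mulVec, h1, Matrix.mulVec_smul, h2,
    smul_smul, mul_comm c d]

lemma rel_adjugate {M : Matrix (Fin 2) (Fin 2) ℤ} {x y : ℝ}
    (hdet : M.det = 1 ∨ M.det = -1) (h : Rel M x y) : Rel M.adjugate y x := by
  obtain ⟨c, hc, h1⟩ := h
  have hd : ((M.det : ℤ) : ℝ) ≠ 0 := by rcases hdet with h' | h' <;> rw [h'] <;> norm_num
  refine ⟨(M.det : ℝ) / c, div_ne_zero hd hc, ?_⟩
  have key : φ M.adjugate *ᵥ (c • ![1, y]) = (M.det : ℝ) • ![1, x] := by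
    rw [← h1, Matrix.mulVec_mulVec, ← _root_.map_mul, Matrix.adjugate_mul, phi_smul]
    simp [Matrix.smul_mulVec, Matrix.smul_cons, smul_eq_mul]
  rw [Matrix.mulVec_smul] at key
  have := congrArg (fun w => c⁻¹ • w) key
  simp only [smul_smul, inv_mul_cancel₀ hc, one_smul] at this
  rw [this, div_eq_inv_mul]

lemma rel_digit {x : ℝ} (hx : x ≠ 0) (n : ℤ) : Rel !![0, 1; 1, n] x (n + x⁻¹) := by
  refine ⟨x, hx, ?_⟩
  funext i
  fin_cases i <;>
    simp [phi_apply, Matrix.mulVec, dotProduct, Fin.sum_univ_two, φ] <;>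
    field_simp <;> ring

lemma rel_neg (x : ℝ) : Rel !![1, 0; 0, -1] x (-x) := by
  refine ⟨1, one_ne_zero, ?_⟩
  funext i
  fin_cases i <;> simp [Matrix.mulVec, dotProduct, Fin.sum_univ_two, φ]


section Gauss

variable {x : ℝ} {a : ℕ → ℤ} {v : ℕ → ℝ}
  (h0 : v 0 = x) (hstep : ∀ k : ℕ, a k = ⌊v k⌋ ∧ v (k + 1) = (v k - ⌊v k⌋)⁻¹)

include h0 hstep

lemma gauss_irrational (hx : Irrational x) : ∀ k, Irrational (v k) := by
  intro k
  induction k with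
  | zero => rwa [h0]
  | succ n ih =>
    rw [(hstep n).2]
    exact (irrational_inv_iff).2 ((irrational_sub_intCast_iff).2 ih)

lemma gauss_chain (hx : Irrational x) :
    ∀ m : ℕ, ∃ P : Matrix (Fin 2) (Fin 2) ℤ, (P.det = 1 ∨ P.det = -1) ∧ Rel P (v m) x := by
  intro m
  induction m with
  | zero => exact ⟨1, Or.inl (Matrix.det_one), h0 ▸ rel_one x⟩
  | succ n ih =>
    obtain ⟨P, hPdet, hP⟩ := ih
    have hirr := gauss_irrational h0 hstep hx
    have hne : v (n + 1) ≠ 0 := (hirr (n + 1)).ne_zero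
    have hinv : (v (n + 1))⁻¹ = v n - ⌊v n⌋ := by
      rw [(hstep n).2, inv_inv]
    have hrel : Rel !![0, 1; 1, ⌊v n⌋] (v (n + 1)) (v n) := by
      have := rel_digit hne (⌊v n⌋ : ℤ)
      rwa [hinv, add_sub_cancel] at this
    refine ⟨P * !![0, 1; 1, ⌊v n⌋], ?_, rel_comp hrel hP⟩
    rw [Matrix.det_mul]
    have : (!![0, 1; 1, (⌊v n⌋ : ℤ)]).det = -1 := by
      simp [Matrix.det_fin_two_of]
    rw [this]
    rcases hPdet with h | h <;> rw [h] <;> norm_num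

lemma gauss_stream (hx : Irrational x) :
    ∀ n, GenContFract.IntFractPair.stream x n = some ⟨⌊v n⌋, Int.fract (v n)⟩ := by
  have hirr := gauss_irrational h0 hstep hx
  intro n
  induction n with
  | zero =>
    rw [GenContFract.IntFractPair.stream_zero, h0]
    rfl
  | succ n ih =>
    have hfr : Int.fract (v n) ≠ 0 := by
      have : Irrational (Int.fract (v n)) := by
        rw [Int.fract]
        exact (irrational_sub_intCast_iff).2 (hirr n)
      exact this.ne_zero
    show (GenContFract.IntFractPair.stream x n).bind _ = _
    rw [ih]
    simp only [Option.bind_some]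
    rw [if_neg hfr]
    have : (Int.fract (v n))⁻¹ = v (n + 1) := by
      rw [(hstep n).2, Int.fract]
    rw [this]
    rfl

end Gauss

/-- two irrationals with the same Gauss continued-fraction digits are equal -/
lemma eq_of_gaussCF {x y : ℝ} {a : ℕ → ℤ} (hx : Irrational x) (hy : Irrational y)
    (hcx : GaussCF x a) (hcy : GaussCF y a) : x = y := by
  obtain ⟨v, hv0, hv⟩ := hcx
  obtain ⟨w, hw0, hw⟩ := hcy
  have hsx := gauss_stream hv0 hv hx
  have hsy := gauss_stream hw0 hw hy
  have hof : GenContFract.of x = GenContFract.of y := by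
    have hh : (GenContFract.of x).h = (GenContFract.of y).h := by
      rw [GenContFract.of_h_eq_floor, GenContFract.of_h_eq_floor,
        ← hv0, ← hw0, ← (hv 0).1, ← (hw 0).1]
    have hs : (GenContFract.of x).s = (GenContFract.of y).s := by
      apply Stream'.Seq.ext
      intro n
      rw [GenContFract.get?_of_eq_some_of_succ_get?_intFractPair_stream (hsx (n + 1)),
        GenContFract.get?_of_eq_some_of_succ_get?_intFractPair_stream (hsy (n + 1))]
      have hd : ⌊v (n + 1)⌋ = ⌊w (n + 1)⌋ := by
        rw [← (hv (n + 1)).1, ← (hw (n + 1)).1]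
      rw [hd]
    exact GenContFract.ext hh hs
  have t1 := GenContFract.of_convergence x
  have t2 := GenContFract.of_convergence y
  rw [hof] at t1
  exact tendsto_nhds_unique t1 t2


lemma vec_of_comp {M : Matrix (Fin 2) (Fin 2) ℤ} {u lam : ℝ}
    (h0 : (M 0 0 : ℝ) + (M 0 1 : ℝ) * u = lam)
    (h1 : (M 1 0 : ℝ) + (M 1 1 : ℝ) * u = lam * u) :
    φ M *ᵥ ![1, u] = lam • ![1, u] := by
  funext i
  fin_cases i <;>
    simp only [Fin.zero_eta, Fin.mk_one, Fin.isValue, Matrix.mulVec, dotProduct,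
      Fin.sum_univ_two, phi_apply, Matrix.cons_val_zero, Matrix.cons_val_one,
      Matrix.head_cons, Pi.smul_apply, smul_eq_mul] <;>
    linarith [h0, h1]

lemma comp_of_vec {M : Matrix (Fin 2) (Fin 2) ℤ} {u lam : ℝ}
    (h : φ M *ᵥ ![1, u] = lam • ![1, u]) :
    (M 0 0 : ℝ) + (M 0 1 : ℝ) * u = lam ∧ (M 1 0 : ℝ) + (M 1 1 : ℝ) * u = lam * u := by
  have h0 := congrFun h 0
  have h1 := congrFun h 1
  simp only [Matrix.mulVec, dotProduct, Fin.sum_univ_two, phi_apply,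
    Matrix.cons_val_zero, Matrix.cons_val_one, Matrix.head_cons, Pi.smul_apply,
    smul_eq_mul, Fin.isValue] at h0 h1
  constructor <;> linarith [h0, h1]

lemma mul_vec_eig {M N : Matrix (Fin 2) (Fin 2) ℤ} {u c d : ℝ}
    (hM : φ M *ᵥ ![1, u] = c • ![1, u]) (hN : φ N *ᵥ ![1, u] = d • ![1, u]) :
    φ (M * N) *ᵥ ![1, u] = (c * d) • ![1, u] := by
  rw [_root_.map_mul, ← Matrix.mulVec_mulVec, hN, Matrix.mulVec_smul, hM, smul_smul, mul_comm]

lemma pow_vec_eig {M : Matrix (Fin 2) (Fin 2) ℤ} {u c : ℝ}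
    (h : φ M *ᵥ ![1, u] = c • ![1, u]) (n : ℕ) :
    φ (M ^ n) *ᵥ ![1, u] = c ^ n • ![1, u] := by
  induction n with
  | zero => simp
  | succ k ih =>
    rw [pow_succ, pow_succ]
    exact mul_vec_eig ih h

lemma adj_vec_eig {M : Matrix (Fin 2) (Fin 2) ℤ} {u c : ℝ} (hc : c ≠ 0)
    (hdet : M.det = 1) (h : φ M *ᵥ ![1, u] = c • ![1, u]) :
    φ M.adjugate *ᵥ ![1, u] = c⁻¹ • ![1, u] := by
  have key : φ M.adjugate *ᵥ (c • ![1, u]) = ![1, u] := by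
    rw [← h, Matrix.mulVec_mulVec, ← _root_.map_mul, Matrix.adjugate_mul, hdet]
    simp
  rw [Matrix.mulVec_smul] at key
  have := congrArg (fun w => c⁻¹ • w) key
  simp only [smul_smul, inv_mul_cancel₀ hc, one_smul] at this
  exact this

lemma eig_gap {M : Matrix (Fin 2) (Fin 2) ℤ} {u lam : ℝ}
    (hdet : M.det = 1) (h : φ M *ᵥ ![1, u] = lam • ![1, u]) (hl : 1 < lam) : 2 < lam := by
  obtain ⟨h0, h1⟩ := comp_of_vec h
  have hd : ((M 0 0 * M 1 1 - M 0 1 * M 1 0 : ℤ) : ℝ) = 1 := by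
    rw [← Matrix.det_fin_two M, hdet]; norm_num
  push_cast at hd
  have hquad : lam ^ 2 - ((M 0 0 : ℝ) + (M 1 1 : ℝ)) * lam + 1 = 0 := by
    linear_combination (-lam + (M 1 1 : ℝ)) * h0 - (M 0 1 : ℝ) * h1 - hd
  have hT3 : ((M 0 0 + M 1 1 : ℤ) : ℝ) ≥ 3 := by
    have h2 : (2 : ℝ) < ((M 0 0 + M 1 1 : ℤ) : ℝ) := by
      push_cast
      nlinarith [sq_nonneg (lam - 1)]
    have : (2 : ℤ) < M 0 0 + M 1 1 := by exact_mod_cast h2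
    exact_mod_cast this
  push_cast at hT3
  nlinarith [hquad, hT3, hl]


lemma abs_irrational {x : ℝ} (hx : Irrational x) : Irrational |x| := by
  rcases abs_choice x with h | h <;> rw [h]
  · exact hx
  · exact (irrational_neg_iff).2 hx

lemma slope_irrational {M : Matrix (Fin 2) (Fin 2) ℤ} {u mu : ℝ} (hdet : M.det = 1)
    (hmu : 1 < mu)
    (h0 : (M 0 0 : ℝ) + (M 0 1 : ℝ) * u = mu)
    (h1 : (M 1 0 : ℝ) + (M 1 1 : ℝ) * u = mu * u) :
    Irrational u := by
  have hd : (M 0 0 : ℝ) * (M 1 1 : ℝ) - (M 0 1 : ℝ) * (M 1 0 : ℝ) = 1 := by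
    have : ((M 0 0 * M 1 1 - M 0 1 * M 1 0 : ℤ) : ℝ) = 1 := by
      rw [← Matrix.det_fin_two M, hdet]; norm_num
    push_cast at this; linarith
  have hquad : mu ^ 2 - ((M 0 0 : ℝ) + (M 1 1 : ℝ)) * mu + 1 = 0 := by
    linear_combination (-mu + (M 1 1 : ℝ)) * h0 - (M 0 1 : ℝ) * h1 - hd
  set T : ℤ := M 0 0 + M 1 1 with hT
  have hTc : ((T : ℤ) : ℝ) = (M 0 0 : ℝ) + (M 1 1 : ℝ) := by push_cast [hT]; ring
  have hT3 : 3 ≤ T := by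
    have h2 : (2 : ℝ) < (T : ℝ) := by
      rw [hTc]; nlinarith [sq_nonneg (mu - 1)]
    have : (2 : ℤ) < T := by exact_mod_cast h2
    omega
  set d : ℤ := T ^ 2 - 4 with hdd
  have hd0 : 0 ≤ d := by nlinarith [hT3]
  have hdsq : (2 * mu - (T : ℝ)) ^ 2 = (d : ℝ) := by
    push_cast [hdd]
    rw [hTc]
    nlinarith [hquad]
  have hnots : ¬ IsSquare d := by
    rintro ⟨r, hr⟩
    set s : ℤ := |r| with hs
    have hs0 : 0 ≤ s := abs_nonneg r
    have hss : s * s = d := by rw [hs, abs_mul_abs_self]; exact hr.symm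
    have h1' : s < T := by nlinarith [hss, hs0, hT3]
    have h2' : T - 2 < s := by nlinarith [hss, hs0, hT3]
    have h3' : s = T - 1 := by omega
    rw [h3'] at hss
    nlinarith [hss, hT3]
  have hsqrt : Irrational (Real.sqrt (d : ℝ)) :=
    (irrational_sqrt_intCast_iff).2 ⟨hnots, hd0⟩
  have hfac : (2 * mu - (T : ℝ) - Real.sqrt (d : ℝ)) * (2 * mu - (T : ℝ) + Real.sqrt (d : ℝ)) = 0 := by
    have hsq : Real.sqrt (d : ℝ) ^ 2 = (d : ℝ) := Real.sq_sqrt (by exact_mod_cast hd0)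
    linear_combination hdsq - hsq
  have hmuirr : Irrational mu := by
    rcases mul_eq_zero.1 hfac with h | h
    · have hmu_eq : mu = ((T : ℝ) + Real.sqrt (d : ℝ)) / ((2 : ℤ) : ℝ) := by
        push_cast; linarith
      rw [hmu_eq]
      exact (irrational_div_intCast_iff).2 ⟨by norm_num, (irrational_intCast_add_iff).2 hsqrt⟩
    · have hmu_eq : mu = ((T : ℝ) - Real.sqrt (d : ℝ)) / ((2 : ℤ) : ℝ) := by
        push_cast; linarith
      rw [hmu_eq]
      exact (irrational_div_intCast_iff).2 ⟨by norm_num,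
        (irrational_intCast_sub_iff).2 hsqrt⟩
  have hM01 : M 0 1 ≠ 0 := by
    intro hz
    rw [hz] at h0
    norm_num at h0
    exact hmuirr.ne_int (M 0 0) h0.symm
  have hu_eq : u = (mu - (M 0 0 : ℝ)) / ((M 0 1 : ℤ) : ℝ) := by
    have : ((M 0 1 : ℤ) : ℝ) ≠ 0 := Int.cast_ne_zero.mpr hM01
    field_simp
    linarith
  rw [hu_eq]
  exact (irrational_div_intCast_iff).2 ⟨hM01, (irrational_sub_intCast_iff).2 hmuirr⟩


lemma rel_abs (x : ℝ) : ∃ D : Matrix (Fin 2) (Fin 2) ℤ,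
    (D.det = 1 ∨ D.det = -1) ∧ Rel D |x| x := by
  rcases le_or_gt 0 x with h | h
  · rw [abs_of_nonneg h]
    exact ⟨1, Or.inl Matrix.det_one, rel_one x⟩
  · rw [abs_of_neg h]
    refine ⟨!![1, 0; 0, -1], Or.inr (by simp [Matrix.det_fin_two_of]), ?_⟩
    have h2 := rel_neg (-x)
    rwa [neg_neg] at h2

lemma pm_mul {x y : ℤ} (hx : x = 1 ∨ x = -1) (hy : y = 1 ∨ y = -1) :
    x * y = 1 ∨ x * y = -1 := by
  rcases hx with h | h <;> rcases hy with h' | h' <;> simp [h, h']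

lemma adj_det_pm {M : Matrix (Fin 2) (Fin 2) ℤ} (h : M.det = 1 ∨ M.det = -1) :
    M.adjugate.det = 1 ∨ M.adjugate.det = -1 := by
  rw [Matrix.det_adjugate]
  simpa using h

lemma conj_pow {G Bm : Matrix (Fin 2) (Fin 2) ℤ} (hG : G.det * G.det = 1) :
    ∀ l : ℕ, 1 ≤ l →
      (G.det • (G.adjugate * Bm * G)) ^ l = G.det • (G.adjugate * Bm ^ l * G) := by
  intro l hl
  induction l, hl using Nat.le_induction with
  | base => rw [pow_one, pow_one]
  | succ l hl ih =>
    have hGadj : G * G.adjugate = G.det • 1 := Matrix.mul_adjugate G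
    rw [pow_succ, ih, smul_mul_smul_comm, hG, one_smul]
    have inner : G.adjugate * Bm ^ l * G * (G.adjugate * Bm * G) =
        G.det • (G.adjugate * Bm ^ (l + 1) * G) := by
      calc G.adjugate * Bm ^ l * G * (G.adjugate * Bm * G)
          = G.adjugate * Bm ^ l * ((G * G.adjugate) * (Bm * G)) := by
            simp only [mul_assoc]
        _ = G.adjugate * Bm ^ l * (G.det • (Bm * G)) := by
            rw [hGadj, smul_mul_assoc, one_mul]
        _ = G.det • (G.adjugate * Bm ^ (l + 1) * G) := by
            rw [mul_smul_comm, pow_succ]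
            congr 1
            simp only [mul_assoc]
    rw [inner]

end Stmt15



/-- Let `A, B ∈ SL(2,ℤ)` with trace `> 2`, and let `u_A, u_B` be the slopes
of their expanding eigenspaces (`A·(1,u_A)ᵀ = μ_A·(1,u_A)ᵀ` with `μ_A > 1`, and similarly
for `B`). Let `[a₀; a₁, …]`, `[b₀; b₁, …]` be the continued fraction expansions of `|u_A|`
and `|u_B|`. If there exist `m, n ≥ 0` with `a_{m+i} = b_{n+i}` for all `i ≥ 0`, then there
are nonzero integers `k, l` and `C ∈ GL(2,ℤ)` with `C·Aᵏ·C⁻¹ = Bˡ` or `C·Aᵏ·C⁻¹ = −Bˡ`. -/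
theorem stmt15
    (A B : Matrix.SpecialLinearGroup (Fin 2) ℤ)
    (hAtr : 2 < (A : Matrix (Fin 2) (Fin 2) ℤ).trace)
    (hBtr : 2 < (B : Matrix (Fin 2) (Fin 2) ℤ).trace)
    (uA uB muA muB : ℝ) (hmuA : 1 < muA) (hmuB : 1 < muB)
    (hA0 : ((A : Matrix (Fin 2) (Fin 2) ℤ) 0 0 : ℝ) +
      ((A : Matrix (Fin 2) (Fin 2) ℤ) 0 1 : ℝ) * uA = muA)
    (hA1 : ((A : Matrix (Fin 2) (Fin 2) ℤ) 1 0 : ℝ) +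
      ((A : Matrix (Fin 2) (Fin 2) ℤ) 1 1 : ℝ) * uA = muA * uA)
    (hB0 : ((B : Matrix (Fin 2) (Fin 2) ℤ) 0 0 : ℝ) +
      ((B : Matrix (Fin 2) (Fin 2) ℤ) 0 1 : ℝ) * uB = muB)
    (hB1 : ((B : Matrix (Fin 2) (Fin 2) ℤ) 1 0 : ℝ) +
      ((B : Matrix (Fin 2) (Fin 2) ℤ) 1 1 : ℝ) * uB = muB * uB)
    (a b : ℕ → ℤ) (hcfA : GaussCF |uA| a) (hcfB : GaussCF |uB| b)
    (htail : ∃ m n : ℕ, ∀ i : ℕ, a (m + i) = b (n + i)) :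
    ∃ k l : ℤ, k ≠ 0 ∧ l ≠ 0 ∧ ∃ C : Matrix (Fin 2) (Fin 2) ℤ,
      (C.det = 1 ∨ C.det = -1) ∧
      (C * ((A ^ k : Matrix.SpecialLinearGroup (Fin 2) ℤ) : Matrix (Fin 2) (Fin 2) ℤ) =
          ((B ^ l : Matrix.SpecialLinearGroup (Fin 2) ℤ) : Matrix (Fin 2) (Fin 2) ℤ) * C ∨
        C * ((A ^ k : Matrix.SpecialLinearGroup (Fin 2) ℤ) : Matrix (Fin 2) (Fin 2) ℤ) =
          -((B ^ l : Matrix.SpecialLinearGroup (Fin 2) ℤ) : Matrix (Fin 2) (Fin 2) ℤ) * C) := by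
  classical
  obtain ⟨m, n, htl⟩ := htail
  have huA : Irrational uA := Stmt15.slope_irrational A.prop hmuA hA0 hA1
  have huB : Irrational uB := Stmt15.slope_irrational B.prop hmuB hB0 hB1
  have huAa : Irrational |uA| := Stmt15.abs_irrational huA
  have huBa : Irrational |uB| := Stmt15.abs_irrational huB
  obtain ⟨v, hv0, hv⟩ := hcfA
  obtain ⟨w, hw0, hw⟩ := hcfB
  have hvirr := Stmt15.gauss_irrational hv0 hv huAa
  have hwirr := Stmt15.gauss_irrational hw0 hw huBa
  -- the two tails agree, hence the corresponding complete quotients are equal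
  have hx' : GaussCF (v m) (fun i => a (m + i)) :=
    ⟨fun i => v (m + i), rfl, fun k => hv (m + k)⟩
  have hy' : GaussCF (w n) (fun i => a (m + i)) := by
    refine ⟨fun i => w (n + i), rfl, fun k => ⟨?_, (hw (n + k)).2⟩⟩
    show a (m + k) = ⌊w (n + k)⌋
    rw [htl k]
    exact (hw (n + k)).1
  have heq : v m = w n := Stmt15.eq_of_gaussCF (hvirr m) (hwirr n) hx' hy'
  -- chains of GL2Z matrices relating the tails to |uA|, |uB|
  obtain ⟨P, hPdet, hP⟩ := Stmt15.gauss_chain hv0 hv huAa m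
  obtain ⟨Q, hQdet, hQ⟩ := Stmt15.gauss_chain hw0 hw huBa n
  -- matrices relating |u| and u
  have habsA := Stmt15.rel_abs uA
  have habsB := Stmt15.rel_abs uB
  obtain ⟨DA, hDAdet, hDA⟩ := habsA
  obtain ⟨DB, hDBdet, hDB⟩ := habsB
  -- assemble G with Rel G uA uB
  have hrel1 : Stmt15.Rel DA.adjugate uA |uA| := Stmt15.rel_adjugate hDAdet hDA
  have hrel2 : Stmt15.Rel P.adjugate |uA| (w n) := by
    have h2 := Stmt15.rel_adjugate hPdet hP
    rwa [heq] at h2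
  have hrelG : Stmt15.Rel (DB * (Q * (P.adjugate * DA.adjugate))) uA uB :=
    Stmt15.rel_comp (Stmt15.rel_comp (Stmt15.rel_comp hrel1 hrel2) hQ) hDB
  set G : Matrix (Fin 2) (Fin 2) ℤ := DB * (Q * (P.adjugate * DA.adjugate)) with hGdef
  have hGdet : G.det = 1 ∨ G.det = -1 := by
    rw [hGdef]
    simp only [Matrix.det_mul]
    exact Stmt15.pm_mul hDBdet (Stmt15.pm_mul hQdet
      (Stmt15.pm_mul (Stmt15.adj_det_pm hPdet) (Stmt15.adj_det_pm hDAdet)))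
  have hGG : G.det * G.det = 1 := by rcases hGdet with h | h <;> rw [h] <;> norm_num
  have hGGr : ((G.det : ℤ) : ℝ) * ((G.det : ℤ) : ℝ) = 1 := by exact_mod_cast hGG
  clear_value G
  obtain ⟨c, hc, hGvec⟩ := hrelG
  obtain ⟨c', hc', hGadjvec⟩ := Stmt15.rel_adjugate hGdet ⟨c, hc, hGvec⟩
  -- eigenvector equations
  have hAvec : Stmt15.φ (A : Matrix (Fin 2) (Fin 2) ℤ) *ᵥ ![1, uA] = muA • ![1, uA] :=
    Stmt15.vec_of_comp hA0 hA1
  have hBvec : Stmt15.φ (B : Matrix (Fin 2) (Fin 2) ℤ) *ᵥ ![1, uB] = muB • ![1, uB] :=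
    Stmt15.vec_of_comp hB0 hB1
  -- c * c' = det G
  have hcc' : c * c' = ((G.det : ℤ) : ℝ) := by
    have h1 : Stmt15.φ (G.adjugate * G) *ᵥ ![1, uA] = (c * c') • ![1, uA] := by
      rw [_root_.map_mul, ← Matrix.mulVec_mulVec, hGvec, Matrix.mulVec_smul, hGadjvec,
        smul_smul]
    rw [Matrix.adjugate_mul, Stmt15.phi_smul] at h1
    have h2 := congrFun h1 0
    simp [Matrix.smul_mulVec] at h2
    simpa using h2.symm
  -- the conjugated matrix MB
  set Bm : Matrix (Fin 2) (Fin 2) ℤ := (B : Matrix (Fin 2) (Fin 2) ℤ) with hBmdef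
  set MB : Matrix (Fin 2) (Fin 2) ℤ := G.det • (G.adjugate * Bm * G) with hMBdef
  clear_value Bm
  have hBmdet : Bm.det = 1 := by rw [hBmdef]; exact B.prop
  have hMBdet : MB.det = 1 := by
    have h1 : (G.adjugate * Bm * G).det = 1 := by
      rw [Matrix.det_mul, Matrix.det_mul, Matrix.det_adjugate, hBmdet]
      simpa using hGG
    rw [hMBdef, Matrix.det_smul, h1, mul_one]
    simp only [Fintype.card_fin]
    rcases hGdet with h | h <;> rw [h] <;> norm_num
  have hMBvec : Stmt15.φ MB *ᵥ ![1, uA] = muB • ![1, uA] := by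
    have step : Stmt15.φ (G.adjugate * Bm * G) *ᵥ ![1, uA]
        = (((G.det : ℤ) : ℝ) * muB) • ![1, uA] := by
      rw [_root_.map_mul, _root_.map_mul, ← Matrix.mulVec_mulVec, ← Matrix.mulVec_mulVec,
        hGvec, Matrix.mulVec_smul, hBvec]
      rw [Matrix.mulVec_smul, Matrix.mulVec_smul, hGadjvec]
      rw [smul_smul, smul_smul]
      congr 1
      rw [← hcc']
      ring
    rw [hMBdef, Stmt15.phi_smul, Matrix.smul_mulVec, step, smul_smul, ← mul_assoc,
      hGGr, one_mul]
  -- the subgroup of logarithms of eigenvalues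
  let H : AddSubgroup ℝ :=
    { carrier := {t : ℝ | ∃ M : Matrix (Fin 2) (Fin 2) ℤ, M.det = 1 ∧
        Stmt15.φ M *ᵥ ![1, uA] = Real.exp t • ![1, uA]},
      zero_mem' := ⟨1, Matrix.det_one, by
        rw [_root_.map_one, Matrix.one_mulVec, Real.exp_zero, one_smul]⟩,
      add_mem' := by
        rintro s t ⟨M, hM, hMv⟩ ⟨N, hN, hNv⟩
        exact ⟨M * N, by rw [Matrix.det_mul, hM, hN, mul_one],
          by rw [Real.exp_add]; exact Stmt15.mul_vec_eig hMv hNv⟩,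
      neg_mem' := by
        rintro t ⟨M, hM, hMv⟩
        refine ⟨M.adjugate, by rw [Matrix.det_adjugate, hM]; simp, ?_⟩
        rw [Real.exp_neg]
        exact Stmt15.adj_vec_eig (Real.exp_ne_zero t) hM hMv }
  have hAH : Real.log muA ∈ H := by
    refine ⟨(A : Matrix (Fin 2) (Fin 2) ℤ), A.prop, ?_⟩
    rw [Real.exp_log (by linarith : (0:ℝ) < muA)]
    exact hAvec
  have hBH : Real.log muB ∈ H := by
    refine ⟨MB, hMBdet, ?_⟩
    rw [Real.exp_log (by linarith : (0:ℝ) < muB)]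
    exact hMBvec
  have hgap : ∀ t ∈ H, 0 < t → Real.log 2 < t := by
    rintro t ⟨M, hM, hMv⟩ ht
    have h1 : 1 < Real.exp t := by
      rw [← Real.exp_zero]
      exact Real.exp_lt_exp.2 ht
    have h2 : 2 < Real.exp t := Stmt15.eig_gap hM hMv h1
    calc Real.log 2 < Real.log (Real.exp t) := Real.log_lt_log (by norm_num) h2
      _ = t := Real.log_exp t
  rcases AddSubgroup.dense_or_cyclic H with hdense | ⟨g, hgen⟩
  · exfalso
    have hlog2 : 0 < Real.log 2 := Real.log_pos (by norm_num)
    obtain ⟨t, htH, ht⟩ := hdense.exists_mem_open isOpen_Ioo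
      (⟨Real.log 2 / 2, by constructor <;> linarith⟩ : (Set.Ioo (0:ℝ) (Real.log 2)).Nonempty)
    exact absurd (hgap t htH ht.1) (not_lt.2 ht.2.le)
  · rw [hgen, AddSubgroup.mem_closure_singleton] at hAH hBH
    obtain ⟨p, hp⟩ := hAH
    obtain ⟨q, hq⟩ := hBH
    rw [zsmul_eq_mul] at hp hq
    have hlA : 0 < Real.log muA := Real.log_pos hmuA
    have hlB : 0 < Real.log muB := Real.log_pos hmuB
    have hp0 : 0 < (p : ℝ) * g := by rw [hp]; exact hlA
    have hq0 : 0 < (q : ℝ) * g := by rw [hq]; exact hlB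
    have hgne : g ≠ 0 := by
      rintro rfl
      simp at hp0
    set k : ℕ := q.natAbs with hkdef
    set l : ℕ := p.natAbs with hldef
    have hpne : p ≠ 0 := by
      rintro rfl
      simp at hp0
    have hqne : q ≠ 0 := by
      rintro rfl
      simp at hq0
    have hk0 : k ≠ 0 := Int.natAbs_ne_zero.2 hqne
    have hl0 : l ≠ 0 := Int.natAbs_ne_zero.2 hpne
    -- (k : ℝ) * p = (l : ℝ) * q
    have hkey2 : ((k : ℤ) : ℝ) * (p : ℝ) = ((l : ℤ) : ℝ) * (q : ℝ) := by
      rcases lt_or_gt_of_ne hgne with hgneg | hgpos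
      · have hpneg : (p : ℝ) < 0 := by nlinarith
        have hqneg : (q : ℝ) < 0 := by nlinarith
        have hp' : p < 0 := by exact_mod_cast hpneg
        have hq' : q < 0 := by exact_mod_cast hqneg
        have e1 : (k : ℤ) = -q := by
          rw [hkdef, ← Int.abs_eq_natAbs, abs_of_neg hq']
        have e2 : (l : ℤ) = -p := by
          rw [hldef, ← Int.abs_eq_natAbs, abs_of_neg hp']
        rw [e1, e2]
        push_cast
        ring
      · have hppos : (0 : ℝ) < (p : ℝ) := by nlinarith
        have hqpos : (0 : ℝ) < (q : ℝ) := by nlinarith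
        have hp' : 0 < p := by exact_mod_cast hppos
        have hq' : 0 < q := by exact_mod_cast hqpos
        have e1 : (k : ℤ) = q := by
          rw [hkdef, ← Int.abs_eq_natAbs, abs_of_pos hq']
        have e2 : (l : ℤ) = p := by
          rw [hldef, ← Int.abs_eq_natAbs, abs_of_pos hp']
        rw [e1, e2]
        ring
    have hlog : (k : ℝ) * Real.log muA = (l : ℝ) * Real.log muB := by
      rw [← hp, ← hq]
      push_cast at hkey2
      linear_combination g * hkey2
    have hpow : muA ^ k = muB ^ l := by
      have e1 : Real.log (muA ^ k) = Real.log (muB ^ l) := by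
        rw [Real.log_pow, Real.log_pow]
        exact_mod_cast hlog
      have e2 := congrArg Real.exp e1
      rwa [Real.exp_log (pow_pos (by linarith) k),
        Real.exp_log (pow_pos (by linarith) l)] at e2
    -- rigidity
    have hAk := Stmt15.pow_vec_eig hAvec k
    have hMBl := Stmt15.pow_vec_eig hMBvec l
    have hEq : (A : Matrix (Fin 2) (Fin 2) ℤ) ^ k = MB ^ l :=
      Stmt15.matrix_eq_of_mulVec_eq huA (by rw [hAk, hMBl, hpow])
    have hMBl_eq : MB ^ l = G.det • (G.adjugate * Bm ^ l * G) :=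
      Stmt15.conj_pow hGG l (Nat.one_le_iff_ne_zero.2 hl0)
    refine ⟨(k : ℤ), (l : ℤ), by exact_mod_cast hk0, by exact_mod_cast hl0, G, hGdet,
      Or.inl ?_⟩
    have hcoeA : ((A ^ ((k : ℕ) : ℤ) : Matrix.SpecialLinearGroup (Fin 2) ℤ) :
        Matrix (Fin 2) (Fin 2) ℤ) = (A : Matrix (Fin 2) (Fin 2) ℤ) ^ k := by
      rw [zpow_natCast]
      exact Matrix.SpecialLinearGroup.coe_pow A k
    have hcoeB : ((B ^ ((l : ℕ) : ℤ) : Matrix.SpecialLinearGroup (Fin 2) ℤ) :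
        Matrix (Fin 2) (Fin 2) ℤ) = Bm ^ l := by
      rw [zpow_natCast, hBmdef]
      exact Matrix.SpecialLinearGroup.coe_pow B l
    rw [hcoeA, hcoeB, hEq, hMBl_eq]
    rw [mul_smul_comm]
    have h1 : G * (G.adjugate * Bm ^ l * G) = (G * G.adjugate) * (Bm ^ l * G) := by
      simp only [mul_assoc]
    rw [h1, Matrix.mul_adjugate, smul_mul_assoc, one_mul, smul_smul, hGG, one_smul]
end
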